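/- arXiv:2602.12664 — 5 statements merged into one kernel-verified Lean document; each statement's English description precedes it below -/
import Mathlib

section
/- With U_S := span_ℝ{1_{S,π} : π ∈ Π*(S)} ⊆ ℝ^{Π*(V)} (and U_S := {0} if |S| ≤ 1), the dimension of U_S equals B_{|S|} − 1, where B_n is the n-th Bell number. -/
open Submodule Finset

variable {V : Type*} [Fintype V] [DecidableEq V]

/-- The set of nontrivial partitions `Π*(α)` of `α`, encoded as setoids different from `⊤`
(the one-block partition). -/
def NontrivPart (α : Type*) := {P : Setoid α // P ≠ ⊤}

/-- Restriction `P|_S` of a partition of `V` to a subset `S`: the partition of `S` whose blocks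
are the nonempty intersections of blocks of `P` with `S`. -/
def restrictS (S : Set V) (P : Setoid V) : Setoid ↥S := Setoid.comap Subtype.val P

open Classical in
/-- The indicator function `1_{S,π} : Π*(V) → ℝ`, equal to `1` at `P` iff `P|_S = π`. -/
noncomputable def ind (S : Set V) (π : Setoid ↥S) : NontrivPart V → ℝ :=
  fun P => if restrictS S P.1 = π then 1 else 0

/-- The subspace `U_S ⊆ ℝ^{Π*(V)}` spanned by the indicators `1_{S,π}` over nontrivial
partitions `π` of `S` (equal to `{0}` when `|S| ≤ 1`, since then no nontrivial `π` exists). -/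
noncomputable def U (S : Set V) : Submodule ℝ (NontrivPart V → ℝ) :=
  Submodule.span ℝ {f | ∃ π : Setoid ↥S, π ≠ ⊤ ∧ f = ind S π}

/-- Bell number `B n`: the number of partitions (setoids) of an `n`-element set. -/
noncomputable def bell (n : ℕ) : ℕ := Nat.card (Setoid (Fin n))

/-- Stirling number of the second kind `S(u,j)`: the number of partitions of a `u`-element set
into exactly `j` blocks. -/
noncomputable def stirling (u j : ℕ) : ℕ :=
  Nat.card {σ : Setoid (Fin u) // Nat.card (Quotient σ) = j}

/-- Transporting setoids along a type equivalence. -/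
def setoidCongr {α β : Type*} (e : α ≃ β) : Setoid α ≃ Setoid β where
  toFun s := Setoid.comap e.symm s
  invFun s := Setoid.comap e s
  left_inv s := Setoid.ext fun a b => by simp [Setoid.comap_rel]
  right_inv s := Setoid.ext fun a b => by simp [Setoid.comap_rel]

noncomputable instance setoidFinite {α : Type*} [Finite α] : Finite (Setoid α) :=
  Finite.of_injective (fun s : Setoid α => s.r) fun a b h =>
    Setoid.ext fun x y => by rw [show a.r = b.r from h]

/-- The extension of a partition `π` of `S` to `V`, adding each element of `V \ S` as a
singleton block. -/
def extSetoid (S : Set V) (π : Setoid ↥S) : Setoid V where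
  r x y := x = y ∨ ∃ (hx : x ∈ S) (hy : y ∈ S), π.r ⟨x, hx⟩ ⟨y, hy⟩
  iseqv := {
    refl := fun _ => Or.inl rfl
    symm := by rintro x y (rfl | ⟨hx, hy, h⟩); exacts [Or.inl rfl, Or.inr ⟨hy, hx, π.symm h⟩]
    trans := by
      rintro x y z (rfl | ⟨hx, hy, h⟩) (rfl | ⟨hy', hz, h'⟩)
      · exact Or.inl rfl
      · exact Or.inr ⟨hy', hz, h'⟩
      · exact Or.inr ⟨hx, hy, h⟩
      · exact Or.inr ⟨hx, hz, π.trans h h'⟩ }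

omit [Fintype V] [DecidableEq V] in
theorem restrict_ext (S : Set V) (π : Setoid ↥S) : restrictS S (extSetoid S π) = π := by
  apply Setoid.ext
  rintro ⟨a, ha⟩ ⟨b, hb⟩
  show (a = b ∨ _) ↔ _
  constructor
  · rintro (h | ⟨hx, hy, h⟩)
    · cases (Subtype.ext h : (⟨a, ha⟩ : ↥S) = ⟨b, hb⟩); exact π.refl _
    · exact h
  · intro h; exact Or.inr ⟨ha, hb, h⟩

omit [Fintype V] [DecidableEq V] in
theorem ext_ne_top (S : Set V) (π : Setoid ↥S) (hπ : π ≠ ⊤) : extSetoid S π ≠ ⊤ := by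
  intro h
  apply hπ
  apply Setoid.ext
  rintro ⟨a, ha⟩ ⟨b, hb⟩
  simp only [Setoid.top_def]
  constructor
  · intro; trivial
  · intro _
    have : (extSetoid S π).r a b := h ▸ trivial
    rcases this with h' | ⟨hx, hy, h'⟩
    · cases (Subtype.ext h' : (⟨a, ha⟩ : ↥S) = ⟨b, hb⟩); exact π.refl _
    · exact h'

/-- `dim U_S = B_{|S|} - 1`. -/
theorem stmt1 (S : Set V) :
    Module.finrank ℝ ↥(U S) = bell (Nat.card ↥S) - 1 := by
  classical
  haveI : Fintype (Setoid ↥S) := Fintype.ofFinite _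
  haveI : Fintype {π : Setoid ↥S // π ≠ ⊤} := Fintype.ofFinite _
  set f : {π : Setoid ↥S // π ≠ ⊤} → (NontrivPart V → ℝ) := fun π => ind S π.1 with hf
  have hset : {g | ∃ π : Setoid ↥S, π ≠ ⊤ ∧ g = ind S π} = Set.range f := by
    ext g
    constructor
    · rintro ⟨π, hπ, rfl⟩; exact ⟨⟨π, hπ⟩, rfl⟩
    · rintro ⟨⟨π, hπ⟩, rfl⟩; exact ⟨π, hπ, rfl⟩
  have hli : LinearIndependent ℝ f := by
    rw [Fintype.linearIndependent_iff]
    intro g hg i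
    have := congrFun hg (id (α := NontrivPart V) ⟨extSetoid S i.1, ext_ne_top S i.1 i.2⟩)
    simp only [Finset.sum_apply, Pi.smul_apply, smul_eq_mul, Pi.zero_apply, hf, ind] at this
    dsimp only [id] at this
    rw [Finset.sum_eq_single i] at this
    · simpa [restrict_ext] using this
    · intro j _ hj
      rw [if_neg, mul_zero]
      rw [restrict_ext]
      intro h
      exact hj (Subtype.ext h.symm)
    · intro h; exact absurd (Finset.mem_univ i) h
  have hU : U S = Submodule.span ℝ (Set.range f) := by rw [U, hset]
  rw [hU, finrank_span_eq_card hli]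
  have hcard : Fintype.card {π : Setoid ↥S // π ≠ ⊤} = Fintype.card (Setoid ↥S) - 1 := by
    rw [Fintype.card_subtype_compl (p := fun π : Setoid ↥S => π = ⊤), Fintype.card_subtype_eq]
  rw [hcard]
  congr 1
  have e : ↥S ≃ Fin (Nat.card ↥S) :=
    Fintype.equivFinOfCardEq Nat.card_eq_fintype_card.symm
  rw [bell, ← Nat.card_congr (setoidCongr e), Nat.card_eq_fintype_card]
end

section
/- For hyperedges e_1,…,e_m ⊆ V, the dimension of the subspace U_{e_1} + ⋯ + U_{e_m} ⊆ ℝ^{Π*(V)} is given by the inclusion-exclusion formula ∑_{∅ ≠ F ⊆ [m]} (−1)^{|F|+1} (B_{k(F)} − 1), where k(F) = |⋂_{i ∈ F} e_i| and B_n is the n-th Bell number. -/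
open Submodule Finset

variable {V : Type*} [Fintype V] [DecidableEq V]

set_option linter.unusedSectionVars false
set_option linter.unreachableTactic false
set_option linter.unusedTactic false
set_option linter.unusedVariables false
set_option linter.unnecessarySimpa false
set_option maxHeartbeats 1000000

section StmtAux

-- finiteness
instance fintSetoid (α : Type*) [Finite α] : Finite (Setoid α) := by
  apply Finite.of_injective (fun σ : Setoid α => {p : α × α | σ p.1 p.2})
  intro σ τ h
  ext x y
  exact Set.ext_iff.mp h (x, y)

instance : Finite (NontrivPart V) := by unfold NontrivPart; infer_instance

-- extension of a partition of S to V by singletons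
def extS (S : Set V) (π : Setoid ↥S) : Setoid V :=
  ⟨fun x y => x = y ∨ ∃ (hx : x ∈ S) (hy : y ∈ S), π ⟨x, hx⟩ ⟨y, hy⟩, by
    constructor
    · intro x; exact Or.inl rfl
    · rintro x y (rfl | ⟨hx, hy, h⟩)
      · exact Or.inl rfl
      · exact Or.inr ⟨hy, hx, π.symm' h⟩
    · rintro x y z (rfl | ⟨hx, hy, h⟩) (rfl | ⟨hy', hz, h'⟩)
      · exact Or.inl rfl
      · exact Or.inr ⟨hy', hz, h'⟩
      · exact Or.inr ⟨hx, hy, h⟩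
      · exact Or.inr ⟨hx, hz, π.trans' h h'⟩⟩

lemma extS_rel {S : Set V} {π : Setoid ↥S} {x y : V} :
    extS S π x y ↔ x = y ∨ ∃ (hx : x ∈ S) (hy : y ∈ S), π ⟨x, hx⟩ ⟨y, hy⟩ := Iff.rfl

lemma restrict_rel {S : Set V} {P : Setoid V} {a b : ↥S} :
    restrictS S P a b ↔ P a.1 b.1 := Iff.rfl

lemma restrict_extS {S : Set V} (π : Setoid ↥S) : restrictS S (extS S π) = π := by
  ext a b
  rw [restrict_rel, extS_rel]
  constructor
  · rintro (h | ⟨hx, hy, h⟩)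
    · rw [show a = b from Subtype.ext h]
    · convert h <;> simp
  · intro h
    exact Or.inr ⟨a.2, b.2, by simpa using h⟩

def sOK (S : Set V) (σ : Setoid V) : Prop := ∀ x y, σ x y → x ≠ y → x ∈ S ∧ y ∈ S

lemma sOK_extS (S : Set V) (π : Setoid ↥S) : sOK S (extS S π) := by
  rintro x y (rfl | ⟨hx, hy, _⟩) hne
  · exact absurd rfl hne
  · exact ⟨hx, hy⟩

lemma sOK_mono {S T : Set V} (h : S ⊆ T) {σ : Setoid V} (hσ : sOK S σ) : sOK T σ :=
  fun x y hxy hne => ⟨h (hσ x y hxy hne).1, h (hσ x y hxy hne).2⟩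

lemma extS_restrict {S : Set V} {σ : Setoid V} (h : sOK S σ) : extS S (restrictS S σ) = σ := by
  ext x y
  rw [extS_rel]
  constructor
  · rintro (rfl | ⟨hx, hy, hr⟩)
    · exact σ.refl' x
    · exact hr
  · intro hxy
    by_cases hne : x = y
    · exact Or.inl hne
    · exact Or.inr ⟨(h x y hxy hne).1, (h x y hxy hne).2, hxy⟩

lemma restrict_mono {S : Set V} {P Q : Setoid V} (h : P ≤ Q) :
    restrictS S P ≤ restrictS S Q := fun _ _ hab => h hab

lemma restrict_bot {S : Set V} : restrictS S (⊥ : Setoid V) = ⊥ := by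
  ext a b
  rw [restrict_rel]
  simp only [Setoid.bot_def]
  exact ⟨fun h => Subtype.ext h, fun h => congrArg Subtype.val h⟩

lemma restrict_top {S : Set V} : restrictS S (⊤ : Setoid V) = ⊤ := by
  ext a b
  constructor
  · intro _
    show (⊤ : Setoid ↥S) a b
    simp [Setoid.top_def]
  · intro _
    show (⊤ : Setoid V) a.1 b.1
    simp [Setoid.top_def]

lemma extS_bot {S : Set V} : extS S (⊥ : Setoid ↥S) = ⊥ := by
  ext x y
  rw [extS_rel]
  simp only [Setoid.bot_def]
  constructor
  · rintro (rfl | ⟨hx, hy, h⟩)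
    · rfl
    · exact congrArg Subtype.val h
  · rintro rfl; exact Or.inl rfl

lemma le_iff_restrict_le {S : Set V} {σ P : Setoid V} (h : sOK S σ) :
    σ ≤ P ↔ restrictS S σ ≤ restrictS S P := by
  constructor
  · intro hle; exact restrict_mono hle
  · intro hle x y hxy
    by_cases hne : x = y
    · rw [hne]
    · obtain ⟨hx, hy⟩ := h x y hxy hne
      exact hle (show restrictS S σ ⟨x, hx⟩ ⟨y, hy⟩ from hxy)

-- Z functions
open Classical in
noncomputable def Zf (σ : Setoid V) : NontrivPart V → ℝ :=
  fun P => if σ ≤ P.1 then 1 else 0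

noncomputable instance (S : Set V) : Fintype (Setoid ↥S) := Fintype.ofFinite _
noncomputable instance : Fintype (Setoid V) := Fintype.ofFinite _

lemma ind_mem_U {S : Set V} {π : Setoid ↥S} (h : π ≠ ⊤) : ind S π ∈ U S :=
  subset_span ⟨π, h, rfl⟩

open Classical in
lemma zf_sub_mem {S : Set V} {σ τ : Setoid V} (hστ : σ ≤ τ) (hσ : sOK S σ) (hτ : sOK S τ) :
    Zf τ - Zf σ ∈ U S := by
  classical
  have key : Zf τ - Zf σ =
      -∑ π ∈ Finset.univ.filter
          (fun π : Setoid ↥S => restrictS S σ ≤ π ∧ ¬ restrictS S τ ≤ π), ind S π := by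
    funext P
    have hsum : ∑ π ∈ Finset.univ.filter
          (fun π : Setoid ↥S => restrictS S σ ≤ π ∧ ¬ restrictS S τ ≤ π), ind S π P =
        if restrictS S σ ≤ restrictS S P.1 ∧ ¬ restrictS S τ ≤ restrictS S P.1 then (1:ℝ)
        else 0 := by
      rw [Finset.sum_filter]
      unfold ind
      rw [Finset.sum_congr rfl (g := fun π => if π = restrictS S P.1 then
          (if restrictS S σ ≤ π ∧ ¬ restrictS S τ ≤ π then (1:ℝ) else 0) else 0)]
      · rw [Finset.sum_ite_eq' Finset.univ (restrictS S P.1)]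
        simp
      · intro π _
        by_cases h1 : π = restrictS S P.1
        · subst h1; simp
        · simp [h1, Ne.symm h1]
    simp only [Pi.sub_apply, Pi.neg_apply, Finset.sum_apply] at hsum ⊢
    rw [hsum]
    simp only [Zf]
    rw [← le_iff_restrict_le hσ, ← le_iff_restrict_le hτ]
    by_cases h1 : τ ≤ P.1
    · have h2 : σ ≤ P.1 := le_trans hστ h1
      simp [h1, h2]
    · by_cases h2 : σ ≤ P.1 <;> simp [h1, h2]
  rw [key]
  apply neg_mem
  apply sum_mem
  intro π hπ
  apply ind_mem_U
  rintro rfl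
  exact (Finset.mem_filter.mp hπ).2.2 le_top

-- supports and one-block setoids
def suppA (σ : Setoid V) : Set V := {x | ∃ y, y ≠ x ∧ σ x y}

def bigS (B : Set V) : Setoid V :=
  ⟨fun x y => x = y ∨ (x ∈ B ∧ y ∈ B), by
    constructor
    · intro x; exact Or.inl rfl
    · rintro x y (rfl | ⟨hx, hy⟩)
      · exact Or.inl rfl
      · exact Or.inr ⟨hy, hx⟩
    · rintro x y z (rfl | ⟨hx, hy⟩) (rfl | ⟨hy', hz⟩)
      · exact Or.inl rfl
      · exact Or.inr ⟨hy', hz⟩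
      · exact Or.inr ⟨hx, hy⟩
      · exact Or.inr ⟨hx, hz⟩⟩

lemma bigS_rel {B : Set V} {x y : V} : bigS B x y ↔ x = y ∨ (x ∈ B ∧ y ∈ B) := Iff.rfl

lemma sOK_bigS {S B : Set V} (h : B ⊆ S) : sOK S (bigS B) := by
  rintro x y (rfl | ⟨hx, hy⟩) hne
  · exact absurd rfl hne
  · exact ⟨h hx, h hy⟩

lemma sOK_suppA (σ : Setoid V) : sOK (suppA σ) σ := by
  intro x y hxy hne
  exact ⟨⟨y, Ne.symm hne, hxy⟩, ⟨x, hne, σ.symm' hxy⟩⟩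

lemma suppA_subset {S : Set V} {σ : Setoid V} (h : sOK S σ) : suppA σ ⊆ S := by
  rintro x ⟨y, hne, hxy⟩
  exact (h x y hxy (Ne.symm hne)).1

lemma le_bigS_suppA (σ : Setoid V) : σ ≤ bigS (suppA σ) := by
  intro x y hxy
  by_cases hne : x = y
  · exact Or.inl hne
  · exact Or.inr ⟨⟨y, Ne.symm hne, hxy⟩, ⟨x, hne, σ.symm' hxy⟩⟩

lemma bigS_mono {B C : Set V} (h : B ⊆ C) : bigS B ≤ bigS C := by
  rintro x y (rfl | ⟨hx, hy⟩)
  · exact Or.inl rfl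
  · exact Or.inr ⟨h hx, h hy⟩

lemma bigS_eq_bot {B : Set V} (h : B.Subsingleton) : bigS B = ⊥ := by
  ext x y
  rw [bigS_rel, Setoid.bot_def]
  constructor
  · rintro (rfl | ⟨hx, hy⟩)
    · rfl
    · exact h hx hy
  · rintro rfl; exact Or.inl rfl

lemma suppA_bigS {B : Set V} (h : ¬ B.Subsingleton) : suppA (bigS B) = B := by
  ext x
  constructor
  · rintro ⟨y, hne, (rfl | ⟨hx, hy⟩)⟩
    · exact absurd rfl hne
    · exact hx
  · intro hx
    obtain ⟨a, ha, b, hb, hab⟩ : ∃ a ∈ B, ∃ b ∈ B, a ≠ b := by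
      by_contra hc
      push_neg at hc
      exact h fun p hp q hq => (hc p hp q hq)
    rcases eq_or_ne x a with rfl | hxa
    · exact ⟨b, Ne.symm hab, Or.inr ⟨hx, hb⟩⟩
    · exact ⟨a, Ne.symm hxa, Or.inr ⟨hx, ha⟩⟩

lemma exists_ne_of_ne_bot {σ : Setoid V} (h : σ ≠ ⊥) : ∃ x y, x ≠ y ∧ σ x y := by
  by_contra hc
  push_neg at hc
  apply h
  ext x y
  rw [Setoid.bot_def]
  constructor
  · intro hxy
    by_contra hne
    exact (hc x y hne) hxy
  · rintro rfl; exact σ.refl' x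

lemma suppA_not_subsingleton {σ : Setoid V} (h : σ ≠ ⊥) : ¬ (suppA σ).Subsingleton := by
  obtain ⟨x, y, hne, hxy⟩ := exists_ne_of_ne_bot h
  intro hs
  exact hne (hs ⟨y, Ne.symm hne, hxy⟩ ⟨x, hne, σ.symm' hxy⟩)

lemma suppA_nonempty {σ : Setoid V} (h : σ ≠ ⊥) : (suppA σ).Nonempty := by
  obtain ⟨x, y, hne, hxy⟩ := exists_ne_of_ne_bot h
  exact ⟨x, y, Ne.symm hne, hxy⟩

-- the partner function and the w family
open Classical in
noncomputable def partner (σ : Setoid V) : Setoid V :=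
  if h : σ = bigS (suppA σ) ∧ (suppA σ).Nonempty then
    bigS (suppA σ \ {h.2.choose}) else bigS (suppA σ)

noncomputable def w (σ : Setoid V) : NontrivPart V → ℝ := Zf σ - Zf (partner σ)

lemma w_mem_U {S : Set V} {σ : Setoid V} (hbot : σ ≠ ⊥) (h : sOK S σ) : w σ ∈ U S := by
  have hsArg : suppA σ ⊆ S := suppA_subset h
  unfold w partner
  split_ifs with h1
  · -- one block: partner ≤ σ
    apply zf_sub_mem _ (sOK_bigS (le_trans (Set.diff_subset) hsArg)) h
    calc bigS (suppA σ \ {h1.2.choose}) ≤ bigS (suppA σ) := bigS_mono Set.diff_subset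
    _ = σ := h1.1.symm
  · -- σ ≤ bigS supp
    have := zf_sub_mem (le_bigS_suppA σ) h (sOK_bigS hsArg)
    have h2 : Zf σ - Zf (bigS (suppA σ)) = -(Zf (bigS (suppA σ)) - Zf σ) := by ring
    rw [h2]
    exact neg_mem this

open Classical in
noncomputable def Zfull (σ : Setoid V) : Setoid V → ℝ := fun P => if σ ≤ P then 1 else 0

noncomputable def Wfull (σ : Setoid V) : Setoid V → ℝ := Zfull σ - Zfull (partner σ)

open Classical in
lemma zfull_indep (c : Setoid V → ℝ) (h : ∑ τ : Setoid V, c τ • Zfull τ = 0) :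
    ∀ τ, c τ = 0 := by
  classical
  have key : ∀ P : Setoid V, ∑ τ ∈ Finset.univ.filter (· ≤ P), c τ = 0 := by
    intro P
    have h2 := congrFun h P
    simp only [Finset.sum_apply, Pi.smul_apply, Pi.zero_apply, Zfull, smul_eq_mul,
      mul_ite, mul_one, mul_zero] at h2
    rw [Finset.sum_filter]
    exact h2
  intro P
  induction P using (IsWellFounded.wf (r := (· < · : Setoid V → Setoid V → Prop))).induction with
  | _ P IH =>
    have hsplit : Finset.univ.filter (· ≤ P) =
        insert P (Finset.univ.filter (· < P)) := by
      ext τ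
      simp only [Finset.mem_filter, Finset.mem_univ, true_and, Finset.mem_insert]
      constructor
      · intro hle
        rcases eq_or_ne τ P with rfl | hne
        · exact Or.inl rfl
        · exact Or.inr (lt_of_le_of_ne hle hne)
      · rintro (rfl | hlt)
        · exact le_refl _
        · exact le_of_lt hlt
    have h2 := key P
    rw [hsplit, Finset.sum_insert (by simp)] at h2
    have h3 : ∑ τ ∈ Finset.univ.filter (· < P), c τ = 0 :=
      Finset.sum_eq_zero fun τ hτ => IH τ (by simpa using hτ)
    linarith

noncomputable instance instFintypeNeBot : Fintype {σ : Setoid V // σ ≠ ⊥} := Fintype.ofFinite _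

open Classical in
lemma w_indep (g : {σ : Setoid V // σ ≠ ⊥} → ℝ)
    (hg : ∑ σ : {σ : Setoid V // σ ≠ ⊥}, g σ • w σ.val = 0) :
    ∀ σ, g σ = 0 := by
  classical
  -- lift to the full partition space
  have hfull : ∑ σ : {σ : Setoid V // σ ≠ ⊥}, g σ • Wfull σ.val = 0 := by
    funext P
    by_cases hP : P = ⊤
    · subst hP
      simp only [Finset.sum_apply, Pi.smul_apply, Pi.zero_apply, Wfull, Zfull, Pi.sub_apply,
        smul_eq_mul, le_top, if_pos]
      simp
    · have h2 := congrFun hg (⟨P, hP⟩ : NontrivPart V)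
      erw [Finset.sum_apply] at h2
      simp only [Finset.sum_apply, Pi.smul_apply, Pi.zero_apply, w, Zf, Wfull, Zfull,
        Pi.sub_apply] at h2 ⊢
      exact h2
  set c : Setoid V → ℝ := fun τ =>
    (if h : τ = ⊥ then 0 else g ⟨τ, h⟩) -
      ∑ σ ∈ Finset.univ.filter (fun σ : {σ : Setoid V // σ ≠ ⊥} => partner σ.val = τ), g σ
    with hc_def
  have hA : ∑ τ : Setoid V, (if h : τ = ⊥ then 0 else g ⟨τ, h⟩) • Zfull τ =
      ∑ σ : {σ : Setoid V // σ ≠ ⊥}, g σ • Zfull σ.val := by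
    have e2 := Finset.sum_subtype (p := fun τ : Setoid V => τ ≠ ⊥) (F := instFintypeNeBot)
      (Finset.univ.filter (fun τ : Setoid V => τ ≠ ⊥)) (by simp)
      (fun τ : Setoid V => (if h : τ = ⊥ then 0 else g ⟨τ, h⟩) • Zfull τ)
    have e1 : ∑ τ ∈ Finset.univ.filter (fun τ : Setoid V => τ ≠ ⊥),
        (if h : τ = ⊥ then 0 else g ⟨τ, h⟩) • Zfull τ =
        ∑ τ : Setoid V, (if h : τ = ⊥ then 0 else g ⟨τ, h⟩) • Zfull τ := by
      apply Finset.sum_filter_of_ne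
      intro τ _ hne hbot
      rw [dif_pos hbot] at hne
      simp at hne
    rw [← e1, e2]
    apply Finset.sum_congr rfl
    intro σ _
    rw [dif_neg σ.2]
  have hB : ∑ σ : {σ : Setoid V // σ ≠ ⊥}, g σ • Zfull (partner σ.val) =
      ∑ τ : Setoid V,
        (∑ σ ∈ Finset.univ.filter
          (fun σ : {σ : Setoid V // σ ≠ ⊥} => partner σ.val = τ), g σ) • Zfull τ := by
    rw [← Finset.sum_fiberwise Finset.univ (fun σ : {σ : Setoid V // σ ≠ ⊥} => partner σ.val)
      (fun σ => g σ • Zfull (partner σ.val))]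
    apply Finset.sum_congr rfl
    intro τ _
    rw [Finset.sum_smul]
    apply Finset.sum_congr rfl
    intro σ hσ
    simp only [Finset.mem_filter] at hσ
    rw [hσ.2]
  have hc : ∑ τ : Setoid V, c τ • Zfull τ = 0 := by
    have expand : ∀ τ : Setoid V, c τ • Zfull τ =
        (if h : τ = ⊥ then 0 else g ⟨τ, h⟩) • Zfull τ -
        (∑ σ ∈ Finset.univ.filter
          (fun σ : {σ : Setoid V // σ ≠ ⊥} => partner σ.val = τ), g σ) • Zfull τ := by
      intro τ
      rw [hc_def]
      rw [sub_smul]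
    calc ∑ τ : Setoid V, c τ • Zfull τ
        = ∑ τ : Setoid V, ((if h : τ = ⊥ then 0 else g ⟨τ, h⟩) • Zfull τ -
          (∑ σ ∈ Finset.univ.filter
            (fun σ : {σ : Setoid V // σ ≠ ⊥} => partner σ.val = τ), g σ) • Zfull τ) :=
          Finset.sum_congr rfl (fun τ _ => expand τ)
      _ = ∑ σ : {σ : Setoid V // σ ≠ ⊥}, g σ • Zfull σ.val -
          ∑ σ : {σ : Setoid V // σ ≠ ⊥}, g σ • Zfull (partner σ.val) := by
          rw [Finset.sum_sub_distrib, hA, ← hB]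
      _ = ∑ σ : {σ : Setoid V // σ ≠ ⊥}, g σ • (Zfull σ.val - Zfull (partner σ.val)) := by
          rw [← Finset.sum_sub_distrib]
          apply Finset.sum_congr rfl
          intro σ _
          rw [smul_sub]
      _ = 0 := hfull
  have hc0 : ∀ τ, c τ = 0 := zfull_indep c hc
  -- extract the coefficient equations
  have hceq : ∀ σ : {σ : Setoid V // σ ≠ ⊥},
      g σ = ∑ ρ ∈ Finset.univ.filter
        (fun ρ : {σ : Setoid V // σ ≠ ⊥} => partner ρ.val = σ.val), g ρ := by
    intro σ
    have h2 := hc0 σ.val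
    rw [hc_def] at h2
    simp only [dif_neg σ.2, Subtype.coe_eta, sub_eq_zero] at h2
    exact h2
  -- Step A: non-one-block setoids
  have stepA : ∀ σ : {σ : Setoid V // σ ≠ ⊥}, σ.val ≠ bigS (suppA σ.val) → g σ = 0 := by
    intro σ hob
    rw [hceq σ]
    apply Finset.sum_eq_zero
    intro ρ hρ
    exfalso
    simp only [Finset.mem_filter, Finset.mem_univ, true_and] at hρ
    have hform : ∃ B ⊆ suppA ρ.val, partner ρ.val = bigS B := by
      unfold partner
      split_ifs with h1
      · exact ⟨_, Set.diff_subset, rfl⟩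
      · exact ⟨_, subset_refl _, rfl⟩
    obtain ⟨B, hBsub, hBeq⟩ := hform
    rw [hBeq] at hρ
    by_cases hBs : B.Subsingleton
    · exact σ.2 (hρ ▸ bigS_eq_bot hBs)
    · apply hob
      rw [← hρ, suppA_bigS hBs]
  -- Step B: one-block setoids, by downward induction on the support size
  have stepB : ∀ k, ∀ σ : {σ : Setoid V // σ ≠ ⊥},
      Fintype.card V - (suppA σ.val).ncard = k → g σ = 0 := by
    intro k
    induction k using Nat.strong_induction_on with
    | _ k IH =>
      intro σ hk
      by_cases hob : σ.val = bigS (suppA σ.val)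
      · rw [hceq σ]
        apply Finset.sum_eq_zero
        intro ρ hρ
        simp only [Finset.mem_filter, Finset.mem_univ, true_and] at hρ
        by_cases hob' : ρ.val = bigS (suppA ρ.val)
        · -- ρ is one-block, its partner drops one element of the support
          have hcond : ρ.val = bigS (suppA ρ.val) ∧ (suppA ρ.val).Nonempty :=
            ⟨hob', suppA_nonempty ρ.2⟩
          rw [partner, dif_pos hcond] at hρ
          set x := hcond.2.choose with hx
          have hxmem : x ∈ suppA ρ.val := hcond.2.choose_spec
          set D := suppA ρ.val \ {x} with hD
          have hDns : ¬ D.Subsingleton := by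
            intro hs
            exact σ.2 (hρ ▸ bigS_eq_bot hs)
          have hsupp : suppA σ.val = D := by
            rw [← hρ, suppA_bigS hDns]
          have hcard : D.ncard + 1 = (suppA ρ.val).ncard :=
            Set.ncard_diff_singleton_add_one hxmem
          have hle : (suppA ρ.val).ncard ≤ Fintype.card V := by
            have h9 := Set.ncard_le_ncard (Set.subset_univ (suppA ρ.val)) (Set.toFinite _)
            simpa [Set.ncard_univ, Nat.card_eq_fintype_card] using h9
          have hlt : Fintype.card V - (suppA ρ.val).ncard < k := by
            rw [← hk, hsupp]
            omega
          exact IH _ hlt ρ rfl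
        · exact stepA ρ hob'
      · exact stepA σ hob
  intro σ
  exact stepB _ σ rfl

def equivSetoid {α β : Type*} (f : α ≃ β) : Setoid α ≃ Setoid β where
  toFun r := Setoid.comap f.symm r
  invFun s := Setoid.comap f s
  left_inv r := by
    ext x y
    rw [Setoid.comap_rel, Setoid.comap_rel]
    simp
  right_inv s := by
    ext x y
    rw [Setoid.comap_rel, Setoid.comap_rel]
    simp

lemma card_setoid (S : Set V) : Nat.card (Setoid ↥S) = bell (Nat.card ↥S) := by
  unfold bell
  exact Nat.card_congr (equivSetoid (Finite.equivFin ↥S))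

lemma bell_pos (n : ℕ) : 1 ≤ bell n := by
  unfold bell
  exact Nat.one_le_iff_ne_zero.mpr (Nat.card_ne_zero.mpr ⟨⟨⊤⟩, inferInstance⟩)

lemma card_ne_aux {α : Type*} [Finite α] (a : α) :
    Nat.card {x : α // x ≠ a} = Nat.card α - 1 := by
  classical
  letI : Fintype α := Fintype.ofFinite _
  rw [Nat.card_eq_fintype_card, Nat.card_eq_fintype_card]
  have : Fintype.card {x : α // ¬ x = a} = Fintype.card α - Fintype.card {x : α // x = a} :=
    Fintype.card_subtype_compl _
  simpa [Fintype.card_subtype_eq] using this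

/-- The number of admissible indices for `U S`. -/
lemma card_I (S : Set V) :
    Nat.card {σ : {σ : Setoid V // σ ≠ ⊥} // sOK S σ.val} = bell (Nat.card ↥S) - 1 := by
  classical
  have e : {σ : {σ : Setoid V // σ ≠ ⊥} // sOK S σ.val} ≃ {π : Setoid ↥S // π ≠ ⊥} :=
    { toFun := fun σ => ⟨restrictS S σ.1.1, by
        intro hbot
        apply σ.1.2
        rw [← extS_restrict σ.2, hbot, extS_bot]⟩
      invFun := fun π => ⟨⟨extS S π.1, by
        intro h
        apply π.2
        rw [← restrict_extS (S := S) π.1, h, restrict_bot]⟩, sOK_extS S π.1⟩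
      left_inv := fun σ => by
        apply Subtype.ext; apply Subtype.ext
        exact extS_restrict σ.2
      right_inv := fun π => by
        apply Subtype.ext
        exact restrict_extS π.1 }
  rw [Nat.card_congr e, card_ne_aux, card_setoid]

noncomputable instance : Fintype (NontrivPart V) := Fintype.ofFinite _

instance : FiniteDimensional ℝ (NontrivPart V → ℝ) := inferInstance

/-- dimension of `U S`. -/
lemma finrank_U (S : Set V) : Module.finrank ℝ (U S) = bell (Nat.card ↥S) - 1 := by
  classical
  set b : {π : Setoid ↥S // π ≠ ⊤} → (NontrivPart V → ℝ) := fun π => ind S π.1 with hb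
  have hspan : U S = Submodule.span ℝ (Set.range b) := by
    unfold U
    congr 1
    ext f
    constructor
    · rintro ⟨π, hπ, rfl⟩
      exact ⟨⟨π, hπ⟩, rfl⟩
    · rintro ⟨⟨π, hπ⟩, rfl⟩
      exact ⟨π, hπ, rfl⟩
  have hindep : LinearIndependent ℝ b := by
    rw [Fintype.linearIndependent_iff]
    intro g hsum π₀
    have hne : extS S π₀.1 ≠ ⊤ := by
      intro h
      apply π₀.2
      rw [← restrict_extS (S := S) π₀.1, h, restrict_top]
    have h2 := congrFun hsum (⟨extS S π₀.1, hne⟩ : NontrivPart V)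
    replace h2 : ∑ x, g x * ind S x.1 ⟨extS S π₀.1, hne⟩ = 0 := by
      erw [Finset.sum_apply] at h2; exact h2
    simp only [Finset.sum_apply, Pi.smul_apply, Pi.zero_apply, smul_eq_mul, hb, ind] at h2
    rw [Finset.sum_eq_single π₀] at h2
    · simpa [restrict_extS] using h2
    · intro π _ hne'
      have : restrictS S (extS S π₀.1) ≠ π.1 := by
        rw [restrict_extS]
        intro h
        exact hne' (Subtype.ext h.symm)
      simp [this]
    · intro h
      exact absurd (Finset.mem_univ π₀) h
  rw [hspan, finrank_span_eq_card hindep]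
  have := card_ne_aux (⊤ : Setoid ↥S)
  rw [Nat.card_eq_fintype_card] at this
  have h9 : Fintype.card {π : Setoid ↥S // π ≠ ⊤} = Fintype.card {π : Setoid ↥S // π ≠ ⊤} := rfl
  calc Fintype.card {π : Setoid ↥S // π ≠ ⊤}
      = Nat.card {π : Setoid ↥S // π ≠ ⊤} := (Nat.card_eq_fintype_card).symm
    _ = Nat.card (Setoid ↥S) - 1 := card_ne_aux _
    _ = bell (Nat.card ↥S) - 1 := by rw [card_setoid]

lemma w_linIndep : LinearIndependent ℝ (fun σ : {σ : Setoid V // σ ≠ ⊥} => w σ.val) := by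
  rw [Fintype.linearIndependent_iff]
  intro g hsum σ
  exact w_indep g hsum σ

lemma U_eq_span (S : Set V) :
    U S = Submodule.span ℝ
      ((fun σ : {σ : Setoid V // σ ≠ ⊥} => w σ.val) '' {σ | sOK S σ.val}) := by
  classical
  have hle : Submodule.span ℝ
      ((fun σ : {σ : Setoid V // σ ≠ ⊥} => w σ.val) '' {σ | sOK S σ.val}) ≤ U S := by
    rw [Submodule.span_le]
    rintro f ⟨σ, hσ, rfl⟩
    exact w_mem_U σ.2 hσ
  have hindep : LinearIndependent ℝ
      (fun σ : {σ : {σ : Setoid V // σ ≠ ⊥} // sOK S σ.val} => w σ.1.1) :=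
    w_linIndep.comp Subtype.val Subtype.val_injective
  have hrange : Set.range (fun σ : {σ : {σ : Setoid V // σ ≠ ⊥} // sOK S σ.val} => w σ.1.1) =
      (fun σ : {σ : Setoid V // σ ≠ ⊥} => w σ.val) '' {σ | sOK S σ.val} := by
    rw [show (fun σ : {σ : {σ : Setoid V // σ ≠ ⊥} // sOK S σ.val} => w σ.1.1) =
      (fun σ : {σ : Setoid V // σ ≠ ⊥} => w σ.val) ∘ Subtype.val from rfl]
    rw [Set.range_comp, Subtype.range_coe_subtype]
  have hrank : Module.finrank ℝ (Submodule.span ℝ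
      ((fun σ : {σ : Setoid V // σ ≠ ⊥} => w σ.val) '' {σ | sOK S σ.val})) =
      bell (Nat.card ↥S) - 1 := by
    rw [← hrange, finrank_span_eq_card hindep, ← Nat.card_eq_fintype_card, card_I]
  symm
  apply Submodule.eq_of_le_of_finrank_le hle
  rw [hrank, finrank_U]

lemma sOK_biInter_iff {m : ℕ} {e : Fin m → Set V} {F : Finset (Fin m)} {σ : Setoid V} :
    sOK (⋂ i ∈ F, e i) σ ↔ ∀ i ∈ F, sOK (e i) σ := by
  constructor
  · intro h i hi
    exact sOK_mono (Set.biInter_subset_of_mem hi) h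
  · intro h x y hxy hne
    constructor
    · rw [Set.mem_iInter₂]
      exact fun i hi => ((h i hi) x y hxy hne).1
    · rw [Set.mem_iInter₂]
      exact fun i hi => ((h i hi) x y hxy hne).2


end StmtAux

/-- inclusion-exclusion formula for the dimension of `U_{e_1} + ⋯ + U_{e_m}`:
`dim(∑_i U_{e_i}) = ∑_{∅ ≠ F ⊆ [m]} (−1)^{|F|+1} (B_{k(F)} − 1)` with
`k(F) = |⋂_{i ∈ F} e_i|`. -/
theorem stmt6 (m : ℕ) (e : Fin m → Set V) :
    (Module.finrank ℝ ↥(⨆ i, U (e i)) : ℤ) =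
      ∑ F ∈ Finset.univ.powerset.filter (fun F : Finset (Fin m) => F ≠ ∅),
        (-1 : ℤ) ^ (F.card + 1) * ((bell (Nat.card ↥(⋂ i ∈ F, e i)) : ℤ) - 1) := by
  classical
  set T : Fin m → Finset {σ : Setoid V // σ ≠ ⊥} :=
    fun i => Finset.univ.filter (fun σ => sOK (e i) σ.val) with hT
  -- Step 1: the supremum is the span of the `w` family over the union of index sets
  have key : (⨆ i, U (e i)) = Submodule.span ℝ
      ((fun σ : {σ : Setoid V // σ ≠ ⊥} => w σ.val) '' ↑(Finset.univ.biUnion T)) := by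
    calc ⨆ i, U (e i)
        = ⨆ i, Submodule.span ℝ
          ((fun σ : {σ : Setoid V // σ ≠ ⊥} => w σ.val) '' {σ | sOK (e i) σ.val}) :=
          iSup_congr (fun i => U_eq_span (e i))
      _ = Submodule.span ℝ
          (⋃ i, (fun σ : {σ : Setoid V // σ ≠ ⊥} => w σ.val) '' {σ | sOK (e i) σ.val}) :=
          (Submodule.span_iUnion _).symm
      _ = Submodule.span ℝ
          ((fun σ : {σ : Setoid V // σ ≠ ⊥} => w σ.val) '' ↑(Finset.univ.biUnion T)) := by
          rw [← Set.image_iUnion]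
          congr 1
          ext σ
          simp [hT]
  -- Step 2: rank of the span of any subfamily
  have hrank : ∀ B : Finset {σ : Setoid V // σ ≠ ⊥},
      Module.finrank ℝ (Submodule.span ℝ
        ((fun σ : {σ : Setoid V // σ ≠ ⊥} => w σ.val) '' ↑B)) = B.card := by
    intro B
    have hindep := w_linIndep.comp (Subtype.val : {x // x ∈ B} → _) Subtype.val_injective
    have hrange : Set.range ((fun σ : {σ : Setoid V // σ ≠ ⊥} => w σ.val) ∘
        (Subtype.val : {x // x ∈ B} → {σ : Setoid V // σ ≠ ⊥})) =
        (fun σ : {σ : Setoid V // σ ≠ ⊥} => w σ.val) '' ↑B := by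
      rw [Set.range_comp, Subtype.range_coe_subtype, Finset.setOf_mem]
    rw [← hrange, finrank_span_eq_card hindep, Fintype.card_coe]
  have hL : Module.finrank ℝ ↥(⨆ i, U (e i)) = (Finset.univ.biUnion T).card := by
    rw [key, hrank]
  -- Step 3: intersections of the index sets
  have hinf : ∀ F : Finset (Fin m), F.inf T =
      Finset.univ.filter (fun σ : {σ : Setoid V // σ ≠ ⊥} => sOK (⋂ i ∈ F, e i) σ.val) := by
    intro F
    have h1 : F.inf T = Finset.univ.filter
        (fun σ : {σ : Setoid V // σ ≠ ⊥} => ∀ i ∈ F, sOK (e i) σ.val) := by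
      induction F using Finset.induction_on with
      | empty => simp [Finset.inf_empty, Finset.top_eq_univ]
      | insert x s hx ih =>
        rw [Finset.inf_insert, ih]
        ext σ
        simp only [Finset.inf_eq_inter, Finset.mem_inter, Finset.mem_filter, Finset.mem_univ,
          true_and, Finset.mem_insert, hT]
        constructor
        · rintro ⟨h1, h2⟩ i (rfl | hi)
          · exact h1
          · exact h2 i hi
        · intro h
          exact ⟨h _ (Or.inl rfl), fun i hi => h i (Or.inr hi)⟩
    rw [h1]
    apply Finset.filter_congr
    intro σ _
    exact (sOK_biInter_iff (e := e)).symm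
  -- Step 4: cardinality of each intersection
  have hcard : ∀ F : Finset (Fin m),
      (((F.inf T).card : ℤ)) = (bell (Nat.card ↥(⋂ i ∈ F, e i)) : ℤ) - 1 := by
    intro F
    rw [hinf F]
    have h2 : (Finset.univ.filter
        (fun σ : {σ : Setoid V // σ ≠ ⊥} => sOK (⋂ i ∈ F, e i) σ.val)).card =
        Nat.card {σ : {σ : Setoid V // σ ≠ ⊥} // sOK (⋂ i ∈ F, e i) σ.val} := by
      rw [Nat.card_eq_fintype_card, Fintype.card_subtype]
    rw [h2, card_I]
    have := bell_pos (Nat.card ↥(⋂ i ∈ F, e i))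
    push_cast [Nat.cast_sub this]
    ring
  -- Step 5: inclusion-exclusion
  have IE := Finset.inclusion_exclusion_card_biUnion (Finset.univ : Finset (Fin m)) T
  rw [hL, IE]
  have hfilter : Finset.univ.powerset.filter (fun F : Finset (Fin m) => F.Nonempty) =
      Finset.univ.powerset.filter (fun F : Finset (Fin m) => F ≠ ∅) := by
    apply Finset.filter_congr
    intro F _
    simp [Finset.nonempty_iff_ne_empty]
  calc ∑ t : (Finset.univ.powerset.filter (fun F : Finset (Fin m) => F.Nonempty)),
        (-1:ℤ)^(t.1.card+1) * ((t.1.inf' (Finset.mem_filter.1 t.2).2 T).card : ℤ)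
      = ∑ t : (Finset.univ.powerset.filter (fun F : Finset (Fin m) => F.Nonempty)),
        (-1:ℤ)^(t.1.card+1) * ((t.1.inf T).card : ℤ) := by
        apply Finset.sum_congr rfl
        intro t _
        rw [Finset.inf'_eq_inf]
      _ = ∑ F ∈ Finset.univ.powerset.filter (fun F : Finset (Fin m) => F ≠ ∅),
        (-1 : ℤ) ^ (F.card + 1) * ((bell (Nat.card ↥(⋂ i ∈ F, e i)) : ℤ) - 1) := by
        have hcs := Finset.sum_coe_sort (Finset.univ.powerset.filter
          (fun F : Finset (Fin m) => F.Nonempty))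
          (fun F => (-1:ℤ)^(F.card+1) * ((F.inf T).card : ℤ))
        rw [hcs, hfilter]
        apply Finset.sum_congr rfl
        intro F _
        rw [hcard F]
end

section
/- Let S ⊆ V with |S| ≥ 3 be a proper or improper subset of the finite set V, and let T_1, …, T_m be proper subsets of S. Then U_{T_1} + ⋯ + U_{T_m} is a proper subspace of U_S. -/
open Submodule Finset

variable {V : Type*} [Fintype V] [DecidableEq V]

namespace Stmt7Aux

instance setoidFinite (α : Type*) [Finite α] : Finite (Setoid α) :=
  Finite.of_injective (fun s : Setoid α => s.r)
    (fun _ _ h => Setoid.ext fun a b => iff_of_eq (congrFun (congrFun h a) b))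

/-- Möbius weight as a function of the number of blocks. -/
noncomputable def muk (k : ℕ) : ℝ := (-1) ^ (k + 1) * (Nat.factorial (k - 1))

/-- Möbius weight of a partition. -/
noncomputable def mus {α : Type*} (σ : Setoid α) : ℝ := muk (Nat.card (Quotient σ))

lemma muk_ne_zero (k : ℕ) : muk k ≠ 0 :=
  mul_ne_zero (pow_ne_zero _ (by norm_num))
    (Nat.cast_ne_zero.2 (Nat.factorial_ne_zero _))

lemma muk_rec (k : ℕ) (hk : 1 ≤ k) : muk (k + 1) + (k : ℝ) * muk k = 0 := by
  cases k with
  | zero => omega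
  | succ n =>
    simp only [muk, Nat.succ_sub_one, Nat.add_sub_cancel, Nat.factorial_succ]
    push_cast
    ring

lemma setoid_ne_top_iff {α : Type*} {σ : Setoid α} : σ ≠ ⊤ ↔ ∃ x y, ¬ σ x y := by
  constructor
  · intro h
    by_contra hc
    push_neg at hc
    exact h (Setoid.eq_top_iff.2 hc)
  · rintro ⟨x, y, hxy⟩ rfl
    exact hxy trivial

lemma comap_comap {α β γ : Type*} (f : α → β) (g : β → γ) (r : Setoid γ) :
    Setoid.comap f (Setoid.comap g r) = Setoid.comap (g ∘ f) r :=
  Setoid.ext fun _ _ => Iff.rfl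

lemma comap_top {α β : Type*} (f : α → β) : Setoid.comap f (⊤ : Setoid β) = ⊤ :=
  Setoid.ext fun _ _ => Iff.rfl

open Classical in
/-- THE FIBER LEMMA: the sum of Möbius weights over all partitions of `γ`
restricting to a fixed partition `σ'` of `γ \ {a}` is zero. -/
lemma fiber_sum {γ : Type*} [Finite γ] [Fintype (Setoid γ)] (a b : γ) (hba : b ≠ a)
    (σ' : Setoid {x : γ // x ≠ a}) :
    ∑ σ : Setoid γ,
      (if Setoid.comap (Subtype.val : {x : γ // x ≠ a} → γ) σ = σ' then mus σ else 0) = 0 := by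
  classical
  haveI : Fintype (Quotient σ') := Fintype.ofFinite _
  let h : Option (Quotient σ') → γ → Option (Quotient σ') :=
    fun t x => if hx : x = a then t else some (Quotient.mk σ' ⟨x, hx⟩)
  have hA : ∀ t, h t a = t := fun t => dif_pos rfl
  have hB : ∀ t (x : γ) (hx : x ≠ a), h t x = some (Quotient.mk σ' ⟨x, hx⟩) :=
    fun t x hx => dif_neg hx
  let e : Option (Quotient σ') → Setoid γ := fun t => Setoid.ker (h t)
  have hker : ∀ t x y, (e t) x y ↔ h t x = h t y := fun t x y => Iff.rfl
  have hres : ∀ t, Setoid.comap (Subtype.val : {x : γ // x ≠ a} → γ) (e t) = σ' := by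
    intro t
    apply Setoid.ext
    intro x y
    show h t x.1 = h t y.1 ↔ σ' x y
    rw [hB t x.1 x.2, hB t y.1 y.2]
    constructor
    · exact fun hq => Quotient.exact (Option.some_injective _ hq)
    · exact fun hq => congrArg some (Quotient.sound hq)
  have hinj : Function.Injective e := by
    intro t₁ t₂ hE
    have hrel : ∀ x y, (h t₁ x = h t₁ y) ↔ (h t₂ x = h t₂ y) := by
      intro x y
      exact (hker t₁ x y).symm.trans ((Setoid.ext_iff.1 hE x y).trans (hker t₂ x y))
    match t₁, t₂ with
    | none, none => rfl
    | some q₁, some q₂ =>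
      obtain ⟨x', rfl⟩ := Quotient.exists_rep q₁
      have h1 : h (some ⟦x'⟧) a = h (some ⟦x'⟧) x'.1 := by
        rw [hA, hB _ x'.1 x'.2]
      have h2 := (hrel a x'.1).1 h1
      rw [hA, hB _ x'.1 x'.2] at h2
      rw [Option.some_injective _ h2]
    | none, some q₂ =>
      obtain ⟨x', rfl⟩ := Quotient.exists_rep q₂
      have h1 : h (some ⟦x'⟧) a = h (some ⟦x'⟧) x'.1 := by
        rw [hA, hB _ x'.1 x'.2]
      have h2 := (hrel a x'.1).2 h1
      rw [hA, hB _ x'.1 x'.2] at h2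
      exact absurd h2 (by simp)
    | some q₁, none =>
      obtain ⟨x', rfl⟩ := Quotient.exists_rep q₁
      have h1 : h (some ⟦x'⟧) a = h (some ⟦x'⟧) x'.1 := by
        rw [hA, hB _ x'.1 x'.2]
      have h2 := (hrel a x'.1).1 h1
      rw [hA, hB _ x'.1 x'.2] at h2
      exact absurd h2 (by simp)
  have hsurj : ∀ σ : Setoid γ,
      Setoid.comap (Subtype.val : {x : γ // x ≠ a} → γ) σ = σ' → ∃ t, e t = σ := by
    intro σ hσ
    have hres' : ∀ (x y : γ) (hx : x ≠ a) (hy : y ≠ a), σ x y ↔ σ' ⟨x, hx⟩ ⟨y, hy⟩ :=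
      fun x y hx hy =>
        (Setoid.comap_rel (Subtype.val : {x : γ // x ≠ a} → γ) σ ⟨x, hx⟩ ⟨y, hy⟩).symm.trans
          (Setoid.ext_iff.1 hσ ⟨x, hx⟩ ⟨y, hy⟩)
    by_cases hc : ∃ x' : {x : γ // x ≠ a}, σ a x'.1
    · obtain ⟨x₀, hx₀⟩ := hc
      refine ⟨some ⟦x₀⟧, ?_⟩
      apply Setoid.ext
      intro x y
      show h (some ⟦x₀⟧) x = h (some ⟦x₀⟧) y ↔ σ x y
      by_cases hx : x = a <;> by_cases hy : y = a
      · rw [hx, hy]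
        exact iff_of_true rfl (σ.refl' a)
      · rw [hx]
        rw [hA, hB _ y hy]
        constructor
        · intro hq
          exact σ.trans' hx₀
            ((hres' x₀.1 y x₀.2 hy).2 (Quotient.exact (Option.some_injective _ hq)))
        · intro hq
          exact congrArg some
            (Quotient.sound ((hres' x₀.1 y x₀.2 hy).1 (σ.trans' (σ.symm' hx₀) hq)))
      · rw [hy]
        rw [hA, hB _ x hx]
        constructor
        · intro hq
          exact σ.symm' (σ.trans' hx₀
            ((hres' x₀.1 x x₀.2 hx).2 (Quotient.exact (Option.some_injective _ hq.symm))))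
        · intro hq
          exact (congrArg some
            (Quotient.sound ((hres' x₀.1 x x₀.2 hx).1
              (σ.trans' (σ.symm' hx₀) (σ.symm' hq))))).symm
      · rw [hB _ x hx, hB _ y hy]
        constructor
        · exact fun hq => (hres' x y hx hy).2 (Quotient.exact (Option.some_injective _ hq))
        · exact fun hq => congrArg some (Quotient.sound ((hres' x y hx hy).1 hq))
    · refine ⟨none, ?_⟩
      apply Setoid.ext
      intro x y
      show h none x = h none y ↔ σ x y
      by_cases hx : x = a <;> by_cases hy : y = a
      · rw [hx, hy]
        exact iff_of_true rfl (σ.refl' a)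
      · rw [hx]
        rw [hA, hB _ y hy]
        constructor
        · intro hq; exact absurd hq (by simp)
        · intro hq; exact absurd ⟨⟨y, hy⟩, hq⟩ hc
      · rw [hy]
        rw [hA, hB _ x hx]
        constructor
        · intro hq; exact absurd hq (by simp)
        · intro hq; exact absurd ⟨⟨x, hx⟩, σ.symm' hq⟩ hc
      · rw [hB _ x hx, hB _ y hy]
        constructor
        · exact fun hq => (hres' x y hx hy).2 (Quotient.exact (Option.some_injective _ hq))
        · exact fun hq => congrArg some (Quotient.sound ((hres' x y hx hy).1 hq))
  -- cardinalities
  have hcard : ∀ t, Nat.card (Quotient (e t)) = Nat.card ↥(Set.range (h t)) := by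
    intro t
    exact Nat.card_congr (Setoid.quotientKerEquivRange (h t))
  have hcard_some : ∀ q, Nat.card (Quotient (e (some q))) = Nat.card (Quotient σ') := by
    intro q
    rw [hcard]
    have hr : Set.range (h (some q)) = some '' Set.univ := by
      ext c
      simp only [Set.mem_range, Set.mem_image, Set.mem_univ, true_and]
      constructor
      · rintro ⟨x, rfl⟩
        by_cases hx : x = a
        · subst hx; exact ⟨q, (hA _).symm⟩
        · exact ⟨⟦⟨x, hx⟩⟧, (hB _ x hx).symm⟩
      · rintro ⟨c', rfl⟩
        induction c' using Quotient.ind with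
        | _ x' => exact ⟨x'.1, hB _ x'.1 x'.2⟩
    rw [hr, Nat.card_coe_set_eq, Set.ncard_image_of_injective _ (Option.some_injective _),
      Set.ncard_univ]
  have hcard_none : Nat.card (Quotient (e none)) = Nat.card (Quotient σ') + 1 := by
    rw [hcard]
    have hr : Set.range (h none) = insert none (some '' Set.univ) := by
      ext c
      simp only [Set.mem_range, Set.mem_insert_iff, Set.mem_image, Set.mem_univ, true_and]
      constructor
      · rintro ⟨x, rfl⟩
        by_cases hx : x = a
        · subst hx; exact Or.inl (hA none)
        · exact Or.inr ⟨⟦⟨x, hx⟩⟧, (hB _ x hx).symm⟩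
      · rintro (rfl | ⟨c', rfl⟩)
        · exact ⟨a, hA none⟩
        · induction c' using Quotient.ind with
          | _ x' => exact ⟨x'.1, hB _ x'.1 x'.2⟩
    rw [hr, Nat.card_coe_set_eq,
      Set.ncard_insert_of_notMem (by simp) ((some '' Set.univ).toFinite),
      Set.ncard_image_of_injective _ (Option.some_injective _), Set.ncard_univ]
  -- reindex the sum
  have hsum : ∑ σ : Setoid γ,
      (if Setoid.comap (Subtype.val : {x : γ // x ≠ a} → γ) σ = σ' then mus σ else 0)
      = ∑ t : Option (Quotient σ'), mus (e t) := by
    rw [← Finset.sum_filter]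
    refine (Finset.sum_bij (fun t (_ : t ∈ Finset.univ) => e t) ?_ ?_ ?_ ?_).symm
    · intro t _
      exact Finset.mem_filter.2 ⟨Finset.mem_univ _, hres t⟩
    · intro t₁ _ t₂ _ hE
      exact hinj hE
    · intro σ hσ
      obtain ⟨t, ht⟩ := hsurj σ (Finset.mem_filter.1 hσ).2
      exact ⟨t, Finset.mem_univ _, ht⟩
    · intro t _
      rfl
  rw [hsum, Fintype.sum_option]
  simp only [mus, hcard_none, hcard_some]
  rw [Finset.sum_const, Finset.card_univ, nsmul_eq_mul, ← Nat.card_eq_fintype_card]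
  have hk : 1 ≤ Nat.card (Quotient σ') := by
    haveI : Nonempty (Quotient σ') := ⟨⟦⟨b, hba⟩⟧⟩
    exact Nat.card_pos
  exact muk_rec _ hk

open Classical in
/-- KEY SUM: any sum over all partitions of `γ` of the Möbius weight gated by a predicate
depending only on the restriction to `γ \ {a}` vanishes. -/
lemma key_sum {γ : Type*} [Finite γ] [Fintype (Setoid γ)] (a b : γ) (hba : b ≠ a)
    (p : Setoid {x : γ // x ≠ a} → Prop) :
    ∑ σ : Setoid γ,
      (if p (Setoid.comap (Subtype.val : {x : γ // x ≠ a} → γ) σ) then mus σ else 0) = 0 := by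
  classical
  haveI : Fintype (Setoid {x : γ // x ≠ a}) := Fintype.ofFinite _
  rw [← Finset.sum_fiberwise Finset.univ
      (fun σ : Setoid γ => Setoid.comap (Subtype.val : {x : γ // x ≠ a} → γ) σ)
      (fun σ => if p (Setoid.comap (Subtype.val : {x : γ // x ≠ a} → γ) σ) then mus σ else 0)]
  refine Finset.sum_eq_zero fun σ' _ => ?_
  have hcongr : ∀ σ ∈ Finset.univ.filter
      (fun σ : Setoid γ => Setoid.comap (Subtype.val : {x : γ // x ≠ a} → γ) σ = σ'),
      (if p (Setoid.comap (Subtype.val : {x : γ // x ≠ a} → γ) σ) then mus σ else 0)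
      = (if p σ' then mus σ else 0) := by
    intro σ hσ
    rw [(Finset.mem_filter.1 hσ).2]
  rw [Finset.sum_congr rfl hcongr]
  by_cases hp : p σ'
  · simp only [if_pos hp]
    have := fiber_sum a b hba σ'
    rw [← Finset.sum_filter] at this
    convert this using 2
  · simp [hp]

/-- Extension of a partition of `S` to `V` by singletons. -/
def liftSet (S : Set V) (σ : Setoid ↥S) : Setoid V where
  r a b := a = b ∨ ∃ (ha : a ∈ S) (hb : b ∈ S), σ ⟨a, ha⟩ ⟨b, hb⟩
  iseqv := by
    constructor
    · exact fun a => Or.inl rfl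
    · rintro a b (rfl | ⟨ha, hb, hr⟩)
      · exact Or.inl rfl
      · exact Or.inr ⟨hb, ha, σ.symm' hr⟩
    · rintro a b c (rfl | ⟨ha, hb, hr⟩) (rfl | ⟨hb', hc, hr'⟩)
      · exact Or.inl rfl
      · exact Or.inr ⟨hb', hc, hr'⟩
      · exact Or.inr ⟨ha, hb, hr⟩
      · exact Or.inr ⟨ha, hc, σ.trans' hr hr'⟩

lemma restrict_lift (S : Set V) (σ : Setoid ↥S) : restrictS S (liftSet S σ) = σ := by
  apply Setoid.ext
  intro x y
  show (x : V) = y ∨ _ ↔ σ x y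
  constructor
  · rintro (hxy | ⟨ha, hb, hr⟩)
    · rw [Subtype.ext hxy]
    · exact hr
  · intro hr
    exact Or.inr ⟨x.2, y.2, hr⟩

lemma lift_ne_top {S : Set V} {σ : Setoid ↥S} (hσ : σ ≠ ⊤) : liftSet S σ ≠ ⊤ := by
  obtain ⟨x, y, hxy⟩ := setoid_ne_top_iff.1 hσ
  refine setoid_ne_top_iff.2 ⟨x.1, y.1, ?_⟩
  rintro (hxy' | ⟨ha, hb, hr⟩)
  · exact hxy (Subtype.ext hxy' ▸ σ.refl' x)
  · exact hxy hr

lemma restrict_restrict {T S : Set V} (h : T ⊆ S) (P : Setoid V) :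
    restrictS T P = Setoid.comap (Set.inclusion h) (restrictS S P) :=
  Setoid.ext fun _ _ => Iff.rfl

end Stmt7Aux

open Stmt7Aux in
/-- if `|S| ≥ 3` and `T_1, …, T_m` are proper subsets of `S`, then
`U_{T_1} + ⋯ + U_{T_m}` is a proper subspace of `U_S`. -/
theorem stmt7 (S : Set V) (hS : 3 ≤ Nat.card ↥S) (m : ℕ) (T : Fin m → Set V)
    (hT : ∀ i, T i ⊂ S) :
    (⨆ i, U (T i)) < U S := by
  classical
  haveI : Fintype (Setoid ↥S) := Fintype.ofFinite _
  haveI h2 : Nontrivial ↥S := Finite.one_lt_card_iff_nontrivial.1 (by omega)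
  obtain ⟨x, y, hxy⟩ := exists_pair_ne ↥S
  have hbot : (⊥ : Setoid ↥S) ≠ ⊤ := by
    intro h
    exact hxy (Setoid.eq_top_iff.1 h x y)
  -- the evaluation points and linear functional
  set P : Setoid ↥S → NontrivPart V := fun σ =>
    if h : σ = ⊤ then ⟨liftSet S ⊥, lift_ne_top hbot⟩ else ⟨liftSet S σ, lift_ne_top h⟩
    with hPdef
  have hP : ∀ (σ : Setoid ↥S) (h : σ ≠ ⊤), (P σ).1 = liftSet S σ := by
    intro σ h
    rw [hPdef]
    simp [h]
  set w : Setoid ↥S → ℝ := fun σ => if σ = ⊤ then 0 else mus σ with hwdef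
  set L : (NontrivPart V → ℝ) →ₗ[ℝ] ℝ :=
    { toFun := fun f => ∑ σ : Setoid ↥S, w σ * f (P σ)
      map_add' := by
        intro f g
        simp only [Pi.add_apply, mul_add]
        rw [Finset.sum_add_distrib]
      map_smul' := by
        intro c f
        simp only [Pi.smul_apply, smul_eq_mul, RingHom.id_apply]
        rw [Finset.mul_sum]
        exact Finset.sum_congr rfl fun σ _ => by ring } with hLdef
  have hLval : ∀ f, L f = ∑ σ : Setoid ↥S, w σ * f (P σ) := fun f => rfl
  -- each U (T i) is contained in U S
  have hle : ∀ i, U (T i) ≤ U S := by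
    intro i
    have hTS : T i ⊆ S := (hT i).1
    rw [U, Submodule.span_le]
    rintro f ⟨π, hπ, rfl⟩
    have hfun : ind (T i) π = ∑ σ ∈ Finset.univ.filter
        (fun σ : Setoid ↥S => Setoid.comap (Set.inclusion hTS) σ = π), ind S σ := by
      funext Q
      rw [Finset.sum_apply]
      have : ∀ σ ∈ Finset.univ.filter
          (fun σ : Setoid ↥S => Setoid.comap (Set.inclusion hTS) σ = π),
          ind S σ Q = if restrictS S Q.1 = σ then 1 else 0 := fun σ _ => rfl
      rw [Finset.sum_congr rfl this, Finset.sum_ite_eq]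
      simp only [Finset.mem_filter, Finset.mem_univ, true_and]
      show ind (T i) π Q = _
      simp only [ind]
      rw [restrict_restrict hTS]
    rw [hfun]
    refine Submodule.sum_mem _ fun σ hσ => Submodule.subset_span ⟨σ, ?_, rfl⟩
    intro hσtop
    have hmemσ := (Finset.mem_filter.1 hσ).2
    rw [hσtop, Stmt7Aux.comap_top] at hmemσ
    exact hπ hmemσ.symm
  -- each U (T i) is killed by L
  have hker : ∀ i, U (T i) ≤ LinearMap.ker L := by
    intro i
    obtain ⟨a, haS, haT⟩ := Set.exists_of_ssubset (hT i)
    have hTS : T i ⊆ S := (hT i).1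
    set a' : ↥S := ⟨a, haS⟩ with ha'
    obtain ⟨b', hb'⟩ := exists_ne a'
    set j : ↥(T i) → {x : ↥S // x ≠ a'} := fun z =>
      ⟨⟨z.1, hTS z.2⟩, fun hE => haT (by
        have hza : (z : V) = a := congrArg Subtype.val hE
        exact hza ▸ z.2)⟩ with hj
    rw [U, Submodule.span_le]
    rintro f ⟨π, hπ, rfl⟩
    rw [SetLike.mem_coe, LinearMap.mem_ker, hLval]
    have hterm : ∀ σ : Setoid ↥S, w σ * ind (T i) π (P σ)
        = if Setoid.comap j (Setoid.comap (Subtype.val : {x : ↥S // x ≠ a'} → ↥S) σ) = π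
          then mus σ else 0 := by
      intro σ
      rw [comap_comap]
      have hvj : (Subtype.val : {x : ↥S // x ≠ a'} → ↥S) ∘ j = Set.inclusion hTS := rfl
      rw [hvj]
      by_cases hσ : σ = ⊤
      · subst hσ
        rw [Stmt7Aux.comap_top, if_neg (fun h => hπ h.symm)]
        simp [hwdef]
      · have hiv : ind (T i) π (P σ) = if Setoid.comap (Set.inclusion hTS) σ = π then 1 else 0 := by
          simp only [ind]
          rw [hP σ hσ, restrict_restrict hTS, restrict_lift]
        rw [hiv, hwdef]
        simp only [if_neg hσ]
        by_cases hcc : Setoid.comap (Set.inclusion hTS) σ = π <;> simp [hcc]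
    rw [Finset.sum_congr rfl fun σ _ => hterm σ]
    exact key_sum a' b' hb' (fun σ' => Setoid.comap j σ' = π)
  -- the witness
  have hgen : ind S (⊥ : Setoid ↥S) ∈ U S := Submodule.subset_span ⟨⊥, hbot, rfl⟩
  have hLgen : L (ind S (⊥ : Setoid ↥S)) = mus (⊥ : Setoid ↥S) := by
    have hterm : ∀ σ : Setoid ↥S, w σ * ind S (⊥ : Setoid ↥S) (P σ)
        = if σ = ⊥ then mus (⊥ : Setoid ↥S) else 0 := by
      intro σ
      by_cases hσ : σ = ⊤
      · subst hσ
        rw [if_neg (fun h => hbot h.symm)]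
        simp [hwdef]
      · have hiv : ind S (⊥ : Setoid ↥S) (P σ) = if σ = ⊥ then 1 else 0 := by
          simp only [ind]
          rw [hP σ hσ, restrict_lift]
        rw [hiv, hwdef]
        simp only [if_neg hσ]
        by_cases hcc : σ = (⊥ : Setoid ↥S) <;> simp [hcc]
    rw [hLval, Finset.sum_congr rfl fun σ _ => hterm σ,
      Finset.sum_ite_eq' Finset.univ (⊥ : Setoid ↥S) (fun _ => mus (⊥ : Setoid ↥S))]
    simp
  rw [SetLike.lt_iff_le_and_exists]
  refine ⟨iSup_le hle, ind S (⊥ : Setoid ↥S), hgen, fun hmem => ?_⟩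
  have h0 : L (ind S (⊥ : Setoid ↥S)) = 0 := LinearMap.mem_ker.1 ((iSup_le hker) hmem)
  rw [hLgen] at h0
  exact muk_ne_zero _ h0
end

section
/- Let V be a finite set and H₁ = (V, E₁), H₂ = (V, E₂) two hypergraphs whose edge sets are antichains under inclusion (no hyperedge contains another), with all hyperedges of size ≥ 2. If ∑_{e ∈ E₁} U_e = ∑_{e ∈ E₂} U_e as subspaces of ℝ^{Π*(V)}, then E₁ = E₂. -/
open Submodule Finset

variable {V : Type*} [Fintype V] [DecidableEq V]

open Classical in
/-- Auxiliary function whose kernel is the partition `Q_{e,S}` with single nontrivial block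
`(V \ e) ∪ S` and all points of `e \ S` as singletons. -/
noncomputable def gfun (e : Set V) (S : Finset V) (x : V) : Option V :=
  if x ∈ e ∧ x ∉ S then some x else none

/-- The partition of `V` with single (possibly trivial) block `(V \ e) ∪ S` and all points of
`e \ S` singletons. -/
noncomputable def Qset (e : Set V) (S : Finset V) : Setoid V := Setoid.ker (gfun e S)

lemma restrictS_Qset_rel {f e : Set V} {S : Finset V} (a b : ↥f) :
    restrictS f (Qset e S) a b ↔ gfun e S ↑a = gfun e S ↑b := Iff.rfl

lemma restrict_congr {f e : Set V} {S₁ S₂ : Finset V}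
    (h : ∀ x, x ∈ f → gfun e S₁ x = gfun e S₂ x) :
    restrictS f (Qset e S₁) = restrictS f (Qset e S₂) := by
  apply Setoid.ext
  intro a b
  rw [restrictS_Qset_rel, restrictS_Qset_rel, h _ a.2, h _ b.2]

lemma restrict_top_s12 {f e : Set V} {S : Finset V} (h : ∀ x, x ∈ e → x ∈ f → x ∈ S) :
    restrictS f (Qset e S) = ⊤ := by
  apply Setoid.ext
  intro a b
  have hval : ∀ c : ↥f, gfun e S ↑c = none := by
    intro c
    simp only [gfun]
    rw [if_neg]
    rintro ⟨h1, h2⟩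
    exact h2 (h _ h1 c.2)
  constructor
  · intro _
    rw [Setoid.top_def]
    trivial
  · intro _
    rw [restrictS_Qset_rel, hval a, hval b]

lemma Qset_ne_top {e : Set V} {S : Finset V} {x y : V} (hx : x ∈ e) (hxS : x ∉ S)
    (hxy : y ≠ x) : Qset e S ≠ ⊤ := by
  intro h
  have hrel : Qset e S x y := by
    rw [h, Setoid.top_def]
    trivial
  have hgx : gfun e S x = some x := by
    simp only [gfun]
    rw [if_pos ⟨hx, hxS⟩]
  have hg : gfun e S x = gfun e S y := hrel
  rw [hgx] at hg
  by_cases hyc : y ∈ e ∧ y ∉ S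
  · simp only [gfun] at hg
    rw [if_pos hyc] at hg
    exact hxy (Option.some_injective _ hg).symm
  · simp only [gfun] at hg
    rw [if_neg hyc] at hg
    cases hg

lemma restrict_bot_iff {e : Set V} {S : Finset V} (hS : ∀ x ∈ S, x ∈ e) :
    restrictS e (Qset e S) = ⊥ ↔ S.card ≤ 1 := by
  constructor
  · intro h
    by_contra hc
    push_neg at hc
    obtain ⟨x, hx, y, hy, hxy⟩ := Finset.one_lt_card.mp hc
    have hrel : restrictS e (Qset e S) ⟨x, hS x hx⟩ ⟨y, hS y hy⟩ := by
      rw [restrictS_Qset_rel]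
      simp only [gfun]
      rw [if_neg (fun hh => hh.2 hx), if_neg (fun hh => hh.2 hy)]
    rw [h] at hrel
    exact hxy (congrArg Subtype.val hrel)
  · intro h
    apply Setoid.ext
    intro a b
    have hbot : ((⊥ : Setoid ↥e) a b) ↔ a = b := Iff.rfl
    rw [restrictS_Qset_rel, hbot]
    constructor
    · intro hg
      by_cases haS : ↑a ∈ S <;> by_cases hbS : ↑b ∈ S
      · exact Subtype.ext (Finset.card_le_one.mp h _ haS _ hbS)
      · exfalso
        simp only [gfun] at hg
        rw [if_neg (fun hh => hh.2 haS), if_pos ⟨b.2, hbS⟩] at hg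
        cases hg
      · exfalso
        simp only [gfun] at hg
        rw [if_pos ⟨a.2, haS⟩, if_neg (fun hh => hh.2 hbS)] at hg
        cases hg
      · simp only [gfun] at hg
        rw [if_pos ⟨a.2, haS⟩, if_pos ⟨b.2, hbS⟩] at hg
        exact Subtype.ext (Option.some_injective _ hg)
    · rintro rfl; rfl

/-- Key lemma: if `U e` is contained in the span of the `U f`, `f ∈ F`, and `|e| ≥ 2`, but
`e` is contained in no `f ∈ F`, we get a contradiction. -/
lemma key (e : Set V) (F : Set (Set V)) (he2 : 2 ≤ Nat.card ↥e)
    (hnot : ∀ f ∈ F, ¬ e ⊆ f)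
    (hsub : U e ≤ ⨆ f ∈ F, U f) : False := by
  classical
  set E : Finset V := e.toFinset with hEdef
  have hEe : ∀ x, x ∈ E ↔ x ∈ e := fun x => Set.mem_toFinset
  have hcard : 2 ≤ E.card := by
    rwa [Nat.card_coe_set_eq, Set.ncard_eq_toFinset_card'] at he2
  obtain ⟨x₀, hx₀, y₀, hy₀, hxy₀⟩ := Finset.one_lt_card.mp hcard
  have hbotV : (⊥ : Setoid V) ≠ ⊤ := by
    intro h
    have htop : (⊤ : Setoid V) x₀ y₀ := by rw [Setoid.top_def]; trivial
    rw [← h] at htop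
    exact hxy₀ htop
  set P₀ : NontrivPart V := ⟨⊥, hbotV⟩ with hP₀
  set QN : Finset V → NontrivPart V := fun S =>
    if h : Qset e S = ⊤ then P₀ else ⟨Qset e S, h⟩ with hQN
  set I : Finset (Finset V) := E.powerset.erase E with hI
  have hmemI : ∀ S, S ∈ I ↔ S ⊆ E ∧ S ≠ E := by
    intro S
    rw [hI, Finset.mem_erase, Finset.mem_powerset]
    tauto
  have hQval : ∀ S ∈ I, (QN S).1 = Qset e S := by
    intro S hS
    obtain ⟨hSE, hSne⟩ := (hmemI S).1 hS
    obtain ⟨a, haE, haS⟩ := Finset.exists_of_ssubset (lt_of_le_of_ne hSE hSne)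
    obtain ⟨b, _, hba⟩ := Finset.exists_mem_ne hcard a
    have hne : Qset e S ≠ ⊤ := Qset_ne_top ((hEe a).1 haE) haS hba
    rw [hQN]
    exact congrArg Subtype.val (dif_neg hne)
  set L : (NontrivPart V → ℝ) →ₗ[ℝ] ℝ :=
    ∑ S ∈ I, ((-1 : ℝ) ^ S.card) • LinearMap.proj (QN S) with hLdef
  have hL : ∀ h : NontrivPart V → ℝ,
      L h = ∑ S ∈ I, (-1 : ℝ) ^ S.card * h (QN S) := by
    intro h
    rw [hLdef]
    simp [LinearMap.sum_apply, LinearMap.smul_apply, LinearMap.proj_apply, smul_eq_mul]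
  -- L vanishes on each U f
  have hvanish : ∀ f ∈ F, U f ≤ LinearMap.ker L := by
    intro f hf
    obtain ⟨a, hae, haf⟩ := Set.not_subset.mp (hnot f hf)
    have haE : a ∈ E := (hEe a).2 hae
    apply Submodule.span_le.mpr
    rintro _ ⟨π, hπ, rfl⟩
    simp only [SetLike.mem_coe, LinearMap.mem_ker]
    rw [hL]
    set B : Finset V := E.erase a with hB
    have hBI : B ∈ I := by
      rw [hmemI]
      exact ⟨Finset.erase_subset _ _, by rw [hB]; exact (Finset.erase_ne_self).2 haE⟩
    have hindI : ∀ S ∈ I, ind f π (QN S)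
        = if restrictS f (Qset e S) = π then 1 else 0 := by
      intro S hS
      simp only [ind, hQval S hS]
    have hfB : (-1 : ℝ) ^ B.card * ind f π (QN B) = 0 := by
      rw [hindI B hBI]
      have htop : restrictS f (Qset e B) = ⊤ := by
        apply restrict_top_s12
        intro x hxe hxf
        rw [hB, Finset.mem_erase]
        exact ⟨fun hxa => haf (hxa ▸ hxf), (hEe x).2 hxe⟩
      rw [htop, if_neg (Ne.symm hπ), mul_zero]
    apply Finset.sum_involution
      (g := fun S _ => if S = B then S else (if a ∈ S then S.erase a else insert a S))
    · -- f S + f (g S) = 0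
      intro S hS
      by_cases hSB : S = B
      · rw [if_pos hSB, hSB, hfB, add_zero]
      · rw [if_neg hSB]
        have hSI := (hmemI S).1 hS
        have htogI : (if a ∈ S then S.erase a else insert a S) ∈ I := by
          by_cases haS : a ∈ S
          · rw [if_pos haS, hmemI]
            refine ⟨(Finset.erase_subset _ _).trans hSI.1, ?_⟩
            intro hcontra
            exact (Finset.notMem_erase a S) (hcontra ▸ haE)
          · rw [if_neg haS, hmemI]
            refine ⟨Finset.insert_subset haE hSI.1, ?_⟩
            intro hcontra
            apply hSB
            rw [hB, ← hcontra, Finset.erase_insert haS]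
        have hind : ind f π (QN (if a ∈ S then S.erase a else insert a S))
            = ind f π (QN S) := by
          rw [hindI _ htogI, hindI _ hS]
          have hrc : restrictS f (Qset e (if a ∈ S then S.erase a else insert a S))
              = restrictS f (Qset e S) := by
            apply restrict_congr
            intro x hxf
            have hxa : x ≠ a := fun h => haf (h ▸ hxf)
            have hmem : (x ∈ (if a ∈ S then S.erase a else insert a S)) ↔ x ∈ S := by
              by_cases haS : a ∈ S
              · rw [if_pos haS, Finset.mem_erase]
                simp [hxa]
              · rw [if_neg haS, Finset.mem_insert]
                simp [hxa]
            simp only [gfun]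
            rw [if_congr (and_congr_right' (not_congr hmem)) rfl rfl]
          rw [hrc]
        by_cases haS : a ∈ S
        · rw [hind]
          rw [if_pos haS] at hind ⊢
          have hc : S.card = (S.erase a).card + 1 :=
            (Finset.card_erase_add_one haS).symm
          rw [hc, pow_succ]
          ring
        · rw [hind]
          rw [if_neg haS] at hind ⊢
          rw [Finset.card_insert_of_notMem haS, pow_succ]
          ring
    · -- g S ≠ S when f S ≠ 0
      intro S hS hfne
      by_cases hSB : S = B
      · exfalso
        apply hfne
        rw [hSB]
        exact hfB
      · rw [if_neg hSB]
        by_cases haS : a ∈ S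
        · rw [if_pos haS]
          exact (Finset.erase_ne_self).2 haS
        · rw [if_neg haS]
          exact (Finset.insert_ne_self).2 haS
    · -- g S ∈ I
      intro S hS
      by_cases hSB : S = B
      · rw [if_pos hSB]; exact hS
      · rw [if_neg hSB]
        have hSI := (hmemI S).1 hS
        by_cases haS : a ∈ S
        · rw [if_pos haS, hmemI]
          refine ⟨(Finset.erase_subset _ _).trans hSI.1, ?_⟩
          intro hcontra
          exact (Finset.notMem_erase a S) (hcontra ▸ haE)
        · rw [if_neg haS, hmemI]
          refine ⟨Finset.insert_subset haE hSI.1, ?_⟩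
          intro hcontra
          apply hSB
          rw [hB, ← hcontra, Finset.erase_insert haS]
    · -- involution
      intro S hS
      by_cases hSB : S = B
      · simp [hSB]
      · rw [if_neg hSB]
        have hSI := (hmemI S).1 hS
        by_cases haS : a ∈ S
        · rw [if_pos haS]
          have h1 : S.erase a ≠ B := by
            intro hcontra
            apply hSI.2
            rw [← Finset.insert_erase haS, hcontra, hB, Finset.insert_erase haE]
          rw [if_neg h1, if_neg (Finset.notMem_erase a S), Finset.insert_erase haS]
        · rw [if_neg haS]
          have h1 : insert a S ≠ B := by
            intro hcontra
            have : a ∈ B := hcontra ▸ Finset.mem_insert_self a S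
            exact (Finset.notMem_erase a E) (hB ▸ this)
          rw [if_neg h1, if_pos (Finset.mem_insert_self a S), Finset.erase_insert haS]
  -- the witness ind e ⊥ lies in U e but L (ind e ⊥) ≠ 0
  have hbote : (⊥ : Setoid ↥e) ≠ ⊤ := by
    intro h
    have htop : (⊤ : Setoid ↥e) ⟨x₀, (hEe x₀).1 hx₀⟩ ⟨y₀, (hEe y₀).1 hy₀⟩ := by
      rw [Setoid.top_def]; trivial
    rw [← h] at htop
    exact hxy₀ (congrArg Subtype.val htop)
  have hwit : ind e ⊥ ∈ U e := Submodule.subset_span ⟨⊥, hbote, rfl⟩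
  have h0 : L (ind e ⊥) = 0 := by
    have hker : (⨆ f ∈ F, U f) ≤ LinearMap.ker L := iSup₂_le hvanish
    exact LinearMap.mem_ker.mp (hker (hsub hwit))
  have hindI : ∀ S ∈ I, ind e (⊥ : Setoid ↥e) (QN S)
      = if restrictS e (Qset e S) = ⊥ then 1 else 0 := by
    intro S hS
    simp only [ind, hQval S hS]
  have hval : L (ind e ⊥) = 1 - (E.card : ℝ) := by
    rw [hL]
    set J : Finset (Finset V) := insert ∅ (E.image fun x => ({x} : Finset V)) with hJ
    have hJI : J ⊆ I := by
      intro T hT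
      rw [hJ, Finset.mem_insert, Finset.mem_image] at hT
      rw [hmemI]
      rcases hT with rfl | ⟨x, hx, rfl⟩
      · refine ⟨Finset.empty_subset _, ?_⟩
        intro hc
        rw [← hc] at hcard
        simp at hcard
      · refine ⟨Finset.singleton_subset_iff.2 hx, ?_⟩
        intro hc
        rw [← hc] at hcard
        simp at hcard
    have hzero : ∀ S ∈ I, S ∉ J →
        (-1 : ℝ) ^ S.card * ind e (⊥ : Setoid ↥e) (QN S) = 0 := by
      intro S hS hSJ
      have hSI := (hmemI S).1 hS
      have hcard2 : ¬ S.card ≤ 1 := by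
        intro hle
        apply hSJ
        rw [hJ, Finset.mem_insert, Finset.mem_image]
        interval_cases h : S.card
        · left; exact Finset.card_eq_zero.mp h
        · right
          obtain ⟨x, rfl⟩ := Finset.card_eq_one.mp h
          exact ⟨x, hSI.1 (Finset.mem_singleton_self x), rfl⟩
      rw [hindI S hS, if_neg, mul_zero]
      intro hbot
      exact hcard2 ((restrict_bot_iff (fun x hx => (hEe x).1 (hSI.1 hx))).mp hbot)
    rw [← Finset.sum_subset hJI hzero]
    have hns : (∅ : Finset V) ∉ E.image fun x => ({x} : Finset V) := by
      simp
    rw [hJ, Finset.sum_insert hns, Finset.sum_image (fun x _ y _ h =>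
      Finset.singleton_injective h)]
    have hv0 : (-1 : ℝ) ^ (∅ : Finset V).card
        * ind e (⊥ : Setoid ↥e) (QN ∅) = 1 := by
      rw [hindI ∅ (hJI (by simp [hJ]))]
      rw [if_pos ((restrict_bot_iff (by simp)).mpr (by simp))]
      simp
    have hv1 : ∀ x ∈ E, (-1 : ℝ) ^ ({x} : Finset V).card
        * ind e (⊥ : Setoid ↥e) (QN {x}) = -1 := by
      intro x hx
      have hxJ : ({x} : Finset V) ∈ J := by
        rw [hJ, Finset.mem_insert, Finset.mem_image]
        exact Or.inr ⟨x, hx, rfl⟩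
      rw [hindI {x} (hJI hxJ)]
      rw [if_pos ((restrict_bot_iff ?_).mpr (by simp))]
      · simp
      · intro y hy
        rw [Finset.mem_singleton] at hy
        exact (hEe y).1 (hy ▸ hx)
    rw [hv0, Finset.sum_congr rfl hv1, Finset.sum_const]
    simp
    ring
  rw [hval] at h0
  have : (2 : ℝ) ≤ (E.card : ℝ) := by exact_mod_cast hcard
  linarith

/-- two antichain hypergraphs (all hyperedges of size ≥ 2) with the same subspace
`∑_{e ∈ E} U_e ⊆ ℝ^{Π*(V)}` have the same edge set. -/
theorem stmt12 (E₁ E₂ : Set (Set V))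
    (hE₁fin : E₁.Finite) (hE₂fin : E₂.Finite)
    (hE₁2 : ∀ e ∈ E₁, 2 ≤ Nat.card ↥e) (hE₂2 : ∀ e ∈ E₂, 2 ≤ Nat.card ↥e)
    (hE₁anti : ∀ e ∈ E₁, ∀ f ∈ E₁, e ⊆ f → e = f)
    (hE₂anti : ∀ e ∈ E₂, ∀ f ∈ E₂, e ⊆ f → e = f)
    (hcol : (⨆ e ∈ E₁, U e) = ⨆ e ∈ E₂, U e) :
    E₁ = E₂ := by
  have main : ∀ (F G : Set (Set V)), (∀ e ∈ F, 2 ≤ Nat.card ↥e) →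
      ((⨆ e ∈ F, U e) = ⨆ e ∈ G, U e) → ∀ e ∈ F, ∃ g ∈ G, e ⊆ g := by
    intro F G hF2 hFG e he
    by_contra hc
    push_neg at hc
    apply key e G (hF2 e he) (fun g hg hsub => hc g hg hsub)
    calc U e ≤ ⨆ e ∈ F, U e := le_iSup₂ (f := fun e _ => U e) e he
    _ = ⨆ e ∈ G, U e := hFG
  ext e
  constructor
  · intro he
    obtain ⟨f, hf, hef⟩ := main E₁ E₂ hE₁2 hcol e he
    obtain ⟨g, hg, hfg⟩ := main E₂ E₁ hE₂2 hcol.symm f hf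
    have heg : e = g := hE₁anti e he g hg (hef.trans hfg)
    have : e = f := le_antisymm hef (heg ▸ hfg)
    exact this ▸ hf
  · intro he
    obtain ⟨f, hf, hef⟩ := main E₂ E₁ hE₂2 hcol.symm e he
    obtain ⟨g, hg, hfg⟩ := main E₁ E₂ hE₁2 hcol f hf
    have heg : e = g := hE₂anti e he g hg (hef.trans hfg)
    have : e = f := le_antisymm hef (heg ▸ hfg)
    exact this ▸ hf
end

section
/- Let H = (V, E) be a hypergraph with hyperedges of size ≥ 2 and W(H) = ∑_{e ∈ E} U_e. Define D(H) = {S ⊆ V : |S| ≥ 2 and U_S ⊆ W(H)}. Then D(H) = {S ⊆ V : |S| ≥ 2 and S ⊆ e for some e ∈ E}. -/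
open Submodule Finset

variable {V : Type*} [Fintype V] [DecidableEq V]

section Aux

noncomputable instance setoidFintype {α : Type*} [Finite α] : Fintype (Setoid α) := by
  have : Finite (Setoid α) := Finite.of_injective (fun s : Setoid α => ⇑s)
    (fun s t h => Setoid.eq_iff_rel_eq.2 h)
  exact Fintype.ofFinite _

lemma setoid_comap_top {α β : Type*} (f : α → β) : Setoid.comap f ⊤ = ⊤ := by
  ext a b; simp [Setoid.comap_rel, Setoid.top_def]

/-- color weights -/
noncomputable def vv : Fin 3 → ℝ := ![1, 1, -2]

lemma vv_sum : vv 0 + vv 1 + vv 2 = 0 := by norm_num [vv, Matrix.cons_val_two]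

open Classical in
noncomputable def gmap (S : Set V) (g : ↥S → Fin 3) : V → Option (Fin 3) :=
  fun x => if h : x ∈ S then some (g ⟨x, h⟩) else none

noncomputable def gpart (S : Set V) (g : ↥S → Fin 3) : Setoid V := Setoid.ker (gmap S g)

lemma restrictS_gpart (S : Set V) (g : ↥S → Fin 3) :
    restrictS S (gpart S g) = Setoid.ker g := by
  ext a b
  show gmap S (g) a = gmap S g b ↔ g a = g b
  simp [gmap, a.2, b.2]

lemma restrictS_gpart_congr {S : Set V} (e : Set V) {z : ↥S} (hz : (z : V) ∉ e)
    {g g' : ↥S → Fin 3} (hgg : ∀ s, s ≠ z → g s = g' s) :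
    restrictS e (gpart S g) = restrictS e (gpart S g') := by
  have key : ∀ x : V, x ∈ e → gmap S g x = gmap S g' x := by
    intro x hx
    rw [gmap, gmap]
    split
    · next h =>
      rw [hgg ⟨x, h⟩ (by rintro rfl; exact hz hx)]
    · rfl
  ext a b
  show gmap S g a = gmap S g b ↔ gmap S g' a = gmap S g' b
  rw [key a a.2, key b b.2]

open Classical in
noncomputable def extendF (f : NontrivPart V → ℝ) : Setoid V → ℝ :=
  fun P => if h : P = ⊤ then 0 else f ⟨P, h⟩

open Classical in
lemma extendF_ind (T : Set V) (σ : Setoid ↥T) (hσ : σ ≠ ⊤) (P : Setoid V) :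
    extendF (ind T σ) P = if restrictS T P = σ then 1 else 0 := by
  rw [extendF]
  split
  · next h =>
    subst h
    rw [if_neg]
    rw [restrictS, setoid_comap_top]
    exact fun hh => hσ hh.symm
  · rfl

noncomputable def Phi (S : Set V) [Fintype ↥S] : (NontrivPart V → ℝ) →ₗ[ℝ] ℝ where
  toFun f := ∑ g : ↥S → Fin 3, (∏ s, vv (g s)) * extendF f (gpart S g)
  map_add' f₁ f₂ := by
    have : ∀ P : Setoid V, extendF (f₁ + f₂) P = extendF f₁ P + extendF f₂ P := by
      intro P; rw [extendF, extendF, extendF]; split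
      · simp
      · rfl
    simp only [this, mul_add, Finset.sum_add_distrib]
  map_smul' c f := by
    have : ∀ P : Setoid V, extendF (c • f) P = c * extendF f P := by
      intro P; rw [extendF, extendF]; split
      · simp
      · rfl
    simp only [this, RingHom.id_apply, smul_eq_mul, Finset.mul_sum]
    exact Finset.sum_congr rfl fun g _ => by ring

lemma sum_cancel {S : Set V} [Fintype ↥S] (z : ↥S) (D : (↥S → Fin 3) → ℝ)
    (hD : ∀ g c, D (Function.update g z c) = D g) :
    ∑ g : ↥S → Fin 3, (∏ s, vv (g s)) * D g = 0 := by
  classical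
  set E3 := Equiv.piSplitAt z (fun _ : ↥S => Fin 3) with hE3
  rw [← Equiv.sum_comp E3.symm (fun g => (∏ s, vv (g s)) * D g), Fintype.sum_prod_type]
  have happ : ∀ (c : Fin 3) (g' : {s : ↥S // s ≠ z} → Fin 3),
      E3.symm (c, g') = Function.update (E3.symm (0, g')) z c := by
    intro c g'
    funext s
    rw [hE3]
    by_cases h : s = z
    · subst h; simp [Equiv.piSplitAt, Function.update_self]
    · simp [Equiv.piSplitAt, h, Function.update_of_ne h]
  have : ∀ (c : Fin 3) (g' : {s : ↥S // s ≠ z} → Fin 3),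
      (∏ s, vv ((E3.symm (c, g')) s)) * D (E3.symm (c, g')) =
      vv c * ((∏ s ∈ univ.erase z, vv ((E3.symm (0, g')) s)) * D (E3.symm (0, g'))) := by
    intro c g'
    rw [happ c g', hD]
    rw [← Finset.mul_prod_erase univ _ (mem_univ z), Function.update_self]
    rw [mul_assoc]
    congr 2
    refine Finset.prod_congr rfl fun s hs => ?_
    rw [Function.update_of_ne (Finset.ne_of_mem_erase hs)]
  simp only [this, ← Finset.mul_sum]
  rw [← Finset.sum_mul, Fin.sum_univ_three, vv_sum, zero_mul]

lemma Phi_ind_e {S : Set V} [Fintype ↥S] {e : Set V} (z : ↥S) (hz : (z : V) ∉ e)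
    (σ : Setoid ↥e) (hσ : σ ≠ ⊤) : Phi S (ind e σ) = 0 := by
  classical
  show (∑ g : ↥S → Fin 3, (∏ s, vv (g s)) * extendF (ind e σ) (gpart S g)) = 0
  have h1 : ∀ g : ↥S → Fin 3, extendF (ind e σ) (gpart S g) =
      (fun g => if restrictS e (gpart S g) = σ then (1:ℝ) else 0) g :=
    fun g => extendF_ind e σ hσ _
  simp only [h1]
  refine sum_cancel z _ fun g c => ?_
  have : restrictS e (gpart S (Function.update g z c)) = restrictS e (gpart S g) :=
    restrictS_gpart_congr e hz fun s hs => Function.update_of_ne hs _ _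
  rw [this]

open Classical in
lemma Phi_ind_S {S : Set V} [Fintype ↥S] (p q : ↥S) (hpq : q ≠ p) :
    Phi S (ind S (Setoid.ker (fun a : ↥S => if a = p then (0 : Fin 2) else 1))) =
      ∑ cc ∈ univ.filter (fun cc : Fin 3 × Fin 3 => cc.1 ≠ cc.2),
        vv cc.1 * vv cc.2 ^ (Fintype.card ↥S - 1) := by
  classical
  set π : Setoid ↥S := Setoid.ker (fun a : ↥S => if a = p then (0 : Fin 2) else 1) with hπdef
  have hπq : ¬ π q p := by
    intro h
    have : (if q = p then (0:Fin 2) else 1) = (if p = p then (0:Fin 2) else 1) := h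
    rw [if_neg hpq, if_pos rfl] at this
    exact one_ne_zero this
  have hπ : π ≠ ⊤ := fun h => hπq ((Setoid.eq_top_iff.1 h) q p)
  have hval : ∀ g : ↥S → Fin 3, Setoid.ker g = π → ∀ a, a ≠ p → g a = g q := by
    intro g hg a ha
    have : Setoid.ker g a q := by
      rw [hg]
      show (if a = p then (0:Fin 2) else 1) = (if q = p then (0:Fin 2) else 1)
      rw [if_neg ha, if_neg hpq]
    exact this
  show (∑ g : ↥S → Fin 3, (∏ s, vv (g s)) * extendF (ind S π) (gpart S g)) = _
  have h1 : ∀ g : ↥S → Fin 3, extendF (ind S π) (gpart S g) =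
      if Setoid.ker g = π then (1:ℝ) else 0 := by
    intro g
    rw [extendF_ind S π hπ, restrictS_gpart]
  simp only [h1, mul_ite, mul_one, mul_zero]
  rw [← Finset.sum_filter]
  refine Finset.sum_nbij' (fun g => (g p, g q)) (fun cc => fun a => if a = p then cc.1 else cc.2)
    ?_ ?_ ?_ ?_ ?_
  · intro g hg
    simp only [mem_filter, mem_univ, true_and] at hg ⊢
    intro hcc
    have h2 : Setoid.ker g q p := Setoid.ker_def.2 hcc.symm
    rw [hg] at h2
    exact hπq h2
  · intro cc hcc
    simp only [mem_filter, mem_univ, true_and] at hcc ⊢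
    ext a b
    show (if a = p then cc.1 else cc.2) = (if b = p then cc.1 else cc.2) ↔
      (if a = p then (0:Fin 2) else 1) = (if b = p then (0:Fin 2) else 1)
    by_cases ha : a = p <;> by_cases hb : b = p <;>
      simp [ha, hb, hcc, Ne.symm hcc]
  · intro g hg
    simp only [mem_filter, mem_univ, true_and] at hg
    funext a
    show (if a = p then g p else g q) = g a
    by_cases ha : a = p
    · rw [if_pos ha, ha]
    · rw [if_neg ha, hval g hg a ha]
  · intro cc hcc
    have : q = p ↔ False := iff_false_intro hpq
    show ((if p = p then cc.1 else cc.2), (if q = p then cc.1 else cc.2)) = cc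
    rw [if_pos rfl, if_neg hpq]
  · intro g hg
    simp only [mem_filter, mem_univ, true_and] at hg
    show (∏ s, vv (g s)) = vv (g p) * vv (g q) ^ (Fintype.card ↥S - 1)
    rw [← Finset.mul_prod_erase univ _ (mem_univ p)]
    congr 1
    rw [Finset.prod_congr rfl
        (fun s hs => by rw [hval g hg s (Finset.ne_of_mem_erase hs)]),
      Finset.prod_const, Finset.card_erase_of_mem (mem_univ p), Finset.card_univ]

lemma pairsum_ne {m : ℕ} (hm : 1 ≤ m) :
    (∑ cc ∈ univ.filter (fun cc : Fin 3 × Fin 3 => cc.1 ≠ cc.2),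
      vv cc.1 * vv cc.2 ^ m) ≠ 0 := by
  classical
  have hval : (∑ cc ∈ univ.filter (fun cc : Fin 3 × Fin 3 => cc.1 ≠ cc.2),
      vv cc.1 * vv cc.2 ^ m) = 2 * (-2:ℝ)^m - 2 := by
    rw [Finset.sum_filter, Fintype.sum_prod_type]
    simp [Fin.sum_univ_three, vv]
    ring
  rw [hval, sub_ne_zero]
  intro h
  have h2 : ((-2:ℝ))^m = 1 := by linarith
  have habs : |(-2:ℝ)^m| = 2^m := by
    rw [abs_pow]; norm_num
  rw [h2] at habs
  have : (2:ℝ)^1 ≤ 2^m := by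
    apply pow_le_pow_right₀ (by norm_num) hm
  simp at habs
  rw [← habs] at this
  norm_num at this

lemma U_mono {S e : Set V} (h : S ⊆ e) : U S ≤ U e := by
  classical
  rw [U, span_le]
  rintro f ⟨π, hπ, rfl⟩
  have key : ind S π = ∑ σ ∈ univ.filter
      (fun σ : Setoid ↥e => Setoid.comap (Set.inclusion h) σ = π), ind e σ := by
    funext P
    rw [ind, Finset.sum_apply]
    have : ∀ σ ∈ univ.filter
        (fun σ : Setoid ↥e => Setoid.comap (Set.inclusion h) σ = π),
        ind e σ P = if restrictS e P.1 = σ then 1 else 0 := fun σ _ => rfl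
    rw [Finset.sum_congr rfl this, Finset.sum_ite_eq]
    simp only [Finset.mem_filter, Finset.mem_univ, true_and]
    have hre : restrictS S P.1 = Setoid.comap (Set.inclusion h) (restrictS e P.1) := rfl
    simp only [← hre]
  rw [key]
  refine sum_mem fun σ hσ => subset_span ⟨σ, ?_, rfl⟩
  rintro rfl
  rw [Finset.mem_filter] at hσ
  exact hπ (by rw [← hσ.2, setoid_comap_top])

end Aux

/-- with `W(H) = ∑_{e ∈ E} U_e`, the collection
`D(H) = {S : |S| ≥ 2, U_S ⊆ W(H)}` equals `{S : |S| ≥ 2, S ⊆ e for some e ∈ E}`. -/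
theorem stmt13 (E : Set (Set V)) (hEfin : E.Finite) (hE2 : ∀ e ∈ E, 2 ≤ Nat.card ↥e) :
    {S : Set V | 2 ≤ Nat.card ↥S ∧ U S ≤ ⨆ e ∈ E, U e} =
      {S : Set V | 2 ≤ Nat.card ↥S ∧ ∃ e ∈ E, S ⊆ e} := by
  classical
  ext S
  simp only [Set.mem_setOf_eq, and_congr_right_iff]
  intro h2
  constructor
  · intro hU
    by_contra hno
    push_neg at hno
    haveI : Fintype ↥S := Fintype.ofFinite _
    have hcard : 2 ≤ Fintype.card ↥S := by rwa [Nat.card_eq_fintype_card] at h2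
    haveI : Nontrivial ↥S := Fintype.one_lt_card_iff_nontrivial.1 hcard
    obtain ⟨q, p, hpq⟩ := exists_pair_ne ↥S
    set π : Setoid ↥S := Setoid.ker (fun a : ↥S => if a = p then (0 : Fin 2) else 1) with hπdef
    have hπq : ¬ π q p := by
      intro h
      have : (if q = p then (0:Fin 2) else 1) = (if p = p then (0:Fin 2) else 1) := h
      rw [if_neg hpq, if_pos rfl] at this
      exact one_ne_zero this
    have hπ : π ≠ ⊤ := fun h => hπq ((Setoid.eq_top_iff.1 h) q p)
    have hker : (⨆ e ∈ E, U e) ≤ LinearMap.ker (Phi S) := by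
      refine iSup₂_le fun e he => ?_
      rw [U, span_le]
      rintro f ⟨σ, hσ, rfl⟩
      obtain ⟨z, hzS, hze⟩ := Set.not_subset.1 (hno e he)
      exact LinearMap.mem_ker.2 (Phi_ind_e ⟨z, hzS⟩ hze σ hσ)
    have h0 : Phi S (ind S π) = 0 :=
      LinearMap.mem_ker.1 (hker (hU (subset_span ⟨π, hπ, rfl⟩)))
    rw [Phi_ind_S p q hpq] at h0
    exact pairsum_ne (Nat.le_sub_of_add_le hcard) h0
  · rintro ⟨e, he, hSe⟩
    exact (U_mono hSe).trans (le_iSup₂ (f := fun e _ => U e) e he)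
end
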